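/- arXiv:1611.08257 — 4 statements merged into one kernel-verified Lean document; each statement's English description precedes it below -/
import Mathlib

section
/- Let Ω ⊆ ℝ^n be the union of finitely many convex polyhedra P_i, i = 1,…,p̄, let x̄ ∈ Ω and u ∈ T(x̄;Ω). Then N(x̄;Ω;u) = ⋃_{v ∈ T(u; T(x̄;Ω))} N̂(v; T(u; T(x̄;Ω))), i.e. the directional limiting normal cone to Ω at x̄ in direction u equals the union, over all v in the tangent cone to T(x̄;Ω) at u, of the Fréchet normal cones to T(u;T(x̄;Ω)) at v. -/
noncomputable section

open Filter Topology Set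

/-- Euclidean space `ℝ^n`. -/
abbrev Euc (n : ℕ) : Type := EuclideanSpace ℝ (Fin n)

variable {E : Type*} [NormedAddCommGroup E] [NormedSpace ℝ E]
variable {Y : Type*} [NormedAddCommGroup Y] [NormedSpace ℝ Y]

/-- The contingent (Bouligand/tangent) cone `T(x;Ω)`; empty when `x ∉ Ω`. -/
def tcone (Ω : Set E) (x : E) : Set E :=
  {u | x ∈ Ω ∧ ∃ t : ℕ → ℝ, ∃ w : ℕ → E, (∀ k, 0 < t k) ∧
    Tendsto t atTop (𝓝 0) ∧ Tendsto w atTop (𝓝 u) ∧ ∀ k, x + t k • w k ∈ Ω}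

/-- The Fréchet (regular) normal cone `N̂(x;Ω)`, viewed as a set of continuous
linear functionals; empty when `x ∉ Ω`. -/
def fnc (Ω : Set E) (x : E) : Set (E →L[ℝ] ℝ) :=
  {ξ | x ∈ Ω ∧ ∀ ε : ℝ, 0 < ε → ∃ δ : ℝ, 0 < δ ∧
    ∀ y ∈ Ω, ‖y - x‖ < δ → ξ (y - x) ≤ ε * ‖y - x‖}

/-- The limiting (Mordukhovich) normal cone `N(x;Ω)`; empty when `x ∉ Ω`. -/
def lnc (Ω : Set E) (x : E) : Set (E →L[ℝ] ℝ) :=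
  {ξ | x ∈ Ω ∧ ∃ xk : ℕ → E, ∃ ξk : ℕ → (E →L[ℝ] ℝ),
    Tendsto xk atTop (𝓝 x) ∧ Tendsto ξk atTop (𝓝 ξ) ∧ ∀ k, ξk k ∈ fnc Ω (xk k)}

/-- The directional limiting normal cone `N(x;Ω;u)`; empty when `x ∉ Ω`. -/
def dlnc (Ω : Set E) (x u : E) : Set (E →L[ℝ] ℝ) :=
  {ξ | x ∈ Ω ∧ ∃ t : ℕ → ℝ, ∃ w : ℕ → E, ∃ ξk : ℕ → (E →L[ℝ] ℝ), (∀ k, 0 < t k) ∧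
    Tendsto t atTop (𝓝 0) ∧ Tendsto w atTop (𝓝 u) ∧ Tendsto ξk atTop (𝓝 ξ) ∧
    ∀ k, ξk k ∈ fnc Ω (x + t k • w k)}

/-- A convex polyhedron: a finite intersection of closed halfspaces. -/
def IsPolyhedron (P : Set E) : Prop :=
  ∃ k : ℕ, ∃ a : Fin k → (E →L[ℝ] ℝ), ∃ b : Fin k → ℝ, P = {x | ∀ j, a j x ≤ b j}

/-- A union of finitely many convex polyhedra. -/
def IsFinUnionPolyhedra (Ω : Set E) : Prop :=
  ∃ p : ℕ, ∃ P : Fin p → Set E, (∀ i, IsPolyhedron (P i)) ∧ Ω = ⋃ i, P i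

/-- The constraint multifunction `M(x) = F(x) - Ω`. -/
def cmap (F : E → Y) (Ω : Set Y) : E → Set Y := fun x => {y | F x - y ∈ Ω}

/-- Metric subregularity of `M` at `(x̄,ȳ) ∈ gph M`. -/
def SubregAt (M : E → Set Y) (x' : E) (y' : Y) : Prop :=
  y' ∈ M x' ∧ ∃ κ : ℝ, 0 < κ ∧ ∃ ε : ℝ, 0 < ε ∧ ∀ x : E, dist x x' < ε →
    EMetric.infEdist x {z | y' ∈ M z} ≤ ENNReal.ofReal κ * EMetric.infEdist y' (M x)

/-- The directional neighborhood `V_{ρ,δ}(u)`. -/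
def dirNbhd (u : E) (ρ δ : ℝ) : Set E :=
  {z | ‖z‖ ≤ ρ ∧ ‖‖u‖ • z - ‖z‖ • u‖ ≤ δ * (‖z‖ * ‖u‖)}

/-- Metric subregularity of `M` in direction `u` at `(x̄,ȳ) ∈ gph M`. -/
def SubregDir (M : E → Set Y) (x' : E) (y' : Y) (u : E) : Prop :=
  y' ∈ M x' ∧ ∃ ρ : ℝ, 0 < ρ ∧ ∃ δ : ℝ, 0 < δ ∧ ∃ κ : ℝ, 0 < κ ∧
    ∀ z ∈ dirNbhd u ρ δ,
      EMetric.infEdist (x' + z) {z' | y' ∈ M z'} ≤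
        ENNReal.ofReal κ * EMetric.infEdist y' (M (x' + z))

/-- Mixed metric regularity/subregularity of `M = (M₁,M₂)` at `(x̄,(ȳ₁,ȳ₂))`. -/
def MixedRegSubreg {Y₁ Y₂ : Type*} [NormedAddCommGroup Y₁] [NormedSpace ℝ Y₁]
    [NormedAddCommGroup Y₂] [NormedSpace ℝ Y₂]
    (M₁ : E → Set Y₁) (M₂ : E → Set Y₂) (x' : E) (y₁' : Y₁) (y₂' : Y₂) : Prop :=
  y₁' ∈ M₁ x' ∧ y₂' ∈ M₂ x' ∧ ∃ κ : ℝ, 0 < κ ∧ ∃ ε : ℝ, 0 < ε ∧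
    ∀ x : E, ∀ y₁ : Y₁, dist x x' < ε → dist y₁ y₁' < ε →
      EMetric.infEdist x {z | y₁ ∈ M₁ z ∧ y₂' ∈ M₂ z} ≤
        ENNReal.ofReal κ * EMetric.infEdist (y₁, y₂') (M₁ x ×ˢ M₂ x)

namespace Aux

variable {p K : ℕ}

/-- Uniform representation of a finite union of polyhedra. -/
def ufc (a : Fin p → Fin K → (E →L[ℝ] ℝ)) (b : Fin p → Fin K → ℝ) : Set E :=
  ⋃ i, {x | ∀ j, a i j x ≤ b i j}

def locP (a : Fin p → Fin K → (E →L[ℝ] ℝ))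
    (q : (Fin p → Prop) × (Fin p → Fin K → Prop)) : Set E :=
  ⋃ i, ⋃ (_ : q.1 i), {u : E | ∀ j, q.2 i j → a i j u ≤ 0}

def pat (a : Fin p → Fin K → (E →L[ℝ] ℝ)) (b : Fin p → Fin K → ℝ) (x : E) :
    (Fin p → Prop) × (Fin p → Fin K → Prop) :=
  ⟨fun i => ∀ j, a i j x ≤ b i j, fun i j => a i j x = b i j⟩

/-- The local tangent cone at `x`. -/
def locC (a : Fin p → Fin K → (E →L[ℝ] ℝ)) (b : Fin p → Fin K → ℝ) (x : E) : Set E :=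
  locP a (pat a b x)

def pol (S : Set E) : Set (E →L[ℝ] ℝ) := {ξ | ∀ u ∈ S, ξ u ≤ 0}

lemma mem_ufc {a : Fin p → Fin K → (E →L[ℝ] ℝ)} {b : Fin p → Fin K → ℝ} {x : E} :
    x ∈ ufc a b ↔ ∃ i, ∀ j, a i j x ≤ b i j := by
  simp [ufc]

lemma mem_locC {a : Fin p → Fin K → (E →L[ℝ] ℝ)} {b : Fin p → Fin K → ℝ} {x u : E} :
    u ∈ locC a b x ↔ ∃ i, (∀ j, a i j x ≤ b i j) ∧ ∀ j, a i j x = b i j → a i j u ≤ 0 := by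
  simp [locC, locP, pat]

lemma ufc0_smul_mem {a : Fin p → Fin K → (E →L[ℝ] ℝ)} {x : E} {t : ℝ} (ht : 0 ≤ t)
    (hx : x ∈ ufc a (fun _ _ => 0)) : t • x ∈ ufc a (fun _ _ => 0) := by
  rw [mem_ufc] at hx ⊢
  obtain ⟨i, hi⟩ := hx
  refine ⟨i, fun j => ?_⟩
  have := mul_le_mul_of_nonneg_left (hi j) ht
  simpa [mul_comm] using this

lemma ufc0_smul_mem_iff {a : Fin p → Fin K → (E →L[ℝ] ℝ)} {x : E} {t : ℝ} (ht : 0 < t) :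
    t • x ∈ ufc a (fun _ _ => 0) ↔ x ∈ ufc a (fun _ _ => 0) := by
  constructor
  · intro h
    have := ufc0_smul_mem (t := t⁻¹) (by positivity) h
    rwa [inv_smul_smul₀ ht.ne'] at this
  · exact ufc0_smul_mem ht.le

lemma zero_mem_locC {a : Fin p → Fin K → (E →L[ℝ] ℝ)} {b : Fin p → Fin K → ℝ} {x : E}
    (hx : x ∈ ufc a b) : (0 : E) ∈ locC a b x := by
  rw [mem_ufc] at hx
  obtain ⟨i, hi⟩ := hx
  exact mem_locC.2 ⟨i, hi, fun j _ => by simp⟩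

lemma locC_smul {a : Fin p → Fin K → (E →L[ℝ] ℝ)} {b : Fin p → Fin K → ℝ} {x u : E} {t : ℝ}
    (ht : 0 ≤ t) (hu : u ∈ locC a b x) : t • u ∈ locC a b x := by
  rw [mem_locC] at hu ⊢
  obtain ⟨i, hS, hA⟩ := hu
  refine ⟨i, hS, fun j hj => ?_⟩
  have := mul_le_mul_of_nonneg_left (hA j hj) ht
  simpa [mul_comm] using this

lemma locC_closed {a : Fin p → Fin K → (E →L[ℝ] ℝ)} {b : Fin p → Fin K → ℝ} {x : E} :
    IsClosed (locC a b x) := by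
  refine isClosed_iUnion_of_finite fun i => ?_
  refine isClosed_iUnion_of_finite fun _ => ?_
  have : {u : E | ∀ j, (pat a b x).2 i j → a i j u ≤ 0}
      = ⋂ j, {u : E | (pat a b x).2 i j → a i j u ≤ 0} := by
    ext u; simp
  rw [this]
  refine isClosed_iInter fun j => ?_
  by_cases hq : (pat a b x).2 i j
  · simp only [hq, forall_true_left]
    exact isClosed_le (a i j).continuous continuous_const
  · simp [hq]

lemma locC_homog {a : Fin p → Fin K → (E →L[ℝ] ℝ)} {z : E} {t : ℝ} (ht : 0 < t) :
    locC a (fun _ _ => 0) (t • z) = locC a (fun _ _ => 0) z := by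
  have h1 : (fun i => ∀ j, a i j (t • z) ≤ (0 : ℝ)) = (fun i => ∀ j, a i j z ≤ (0 : ℝ)) := by
    funext i
    refine propext ⟨fun h j => ?_, fun h j => ?_⟩ <;> have hj := h j <;>
      simp only [map_smul, smul_eq_mul] at hj ⊢
    · nlinarith
    · nlinarith
  have h2 : (fun (i : Fin p) (j : Fin K) => a i j (t • z) = (0 : ℝ))
      = (fun i j => a i j z = (0 : ℝ)) := by
    funext i j
    refine propext ?_
    simp only [map_smul, smul_eq_mul]
    constructor
    · intro h
      rcases mul_eq_zero.1 h with h | h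
      · exact absurd h ht.ne'
      · exact h
    · intro h; rw [h, mul_zero]
  unfold locC pat
  rw [show ((fun i => ∀ j, a i j (t • z) ≤ (fun _ _ => (0:ℝ)) i j, fun i j => a i j (t • z) = (fun _ _ => (0:ℝ)) i j) : (Fin p → Prop) × (Fin p → Fin K → Prop)) = (fun i => ∀ j, a i j z ≤ (fun _ _ => (0:ℝ)) i j, fun i j => a i j z = (fun _ _ => (0:ℝ)) i j) from by
    simp only []
    rw [h1, h2]]

/-- Local conicity of a finite union of polyhedra. -/
lemma exists_eps (a : Fin p → Fin K → (E →L[ℝ] ℝ)) (b : Fin p → Fin K → ℝ) (x : E) :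
    ∃ ε : ℝ, 0 < ε ∧ ∀ y : E, ‖y‖ < ε → (x + y ∈ ufc a b ↔ y ∈ locC a b x) := by
  classical
  set marg : Option (Fin p × Fin K) → ℝ := fun o =>
    o.elim 1 (fun ij => if a ij.1 ij.2 x = b ij.1 ij.2 then 1
      else |a ij.1 ij.2 x - b ij.1 ij.2| / (‖a ij.1 ij.2‖ + 1)) with hmarg
  have hne : (Finset.univ : Finset (Option (Fin p × Fin K))).Nonempty :=
    ⟨none, Finset.mem_univ _⟩
  set ε := Finset.univ.inf' hne marg with hε
  have hpos : 0 < ε := by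
    rw [hε, Finset.lt_inf'_iff]
    rintro (_ | ⟨i, j⟩) -
    · norm_num [hmarg]
    · simp only [hmarg, Option.elim]
      split
      · norm_num
      · next h =>
        have : |a i j x - b i j| > 0 := abs_pos.2 (sub_ne_zero.2 h)
        positivity
  have hle : ∀ i j, ε ≤ marg (some (i, j)) := fun i j =>
    Finset.inf'_le _ (Finset.mem_univ _)
  have hkey : ∀ i j (y : E), ‖y‖ < ε → a i j x ≠ b i j → |a i j y| < |a i j x - b i j| := by
    intro i j y hy hne'
    have h1 : |a i j y| ≤ ‖a i j‖ * ‖y‖ := (a i j).le_opNorm y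
    have h2 : ε ≤ |a i j x - b i j| / (‖a i j‖ + 1) := by
      have := hle i j
      simpa [hmarg, hne'] using this
    have h3 : 0 ≤ ‖a i j‖ := norm_nonneg _
    have h4 : ε * (‖a i j‖ + 1) ≤ |a i j x - b i j| := by
      rw [← le_div_iff₀ (by positivity)]; exact h2
    have h5 : 0 ≤ ‖y‖ := norm_nonneg _
    nlinarith
  refine ⟨ε, hpos, fun y hy => ?_⟩
  constructor
  · intro hmem
    obtain ⟨i, hi⟩ := mem_ufc.1 hmem
    refine mem_locC.2 ⟨i, fun j => ?_, fun j hact => ?_⟩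
    · by_cases hact : a i j x = b i j
      · exact hact.le
      · have hk := hkey i j y hy hact
        have h6 := hi j
        rw [map_add] at h6
        have h7 := neg_abs_le (a i j y)
        rcases lt_or_ge (b i j) (a i j x) with hgt | hle'
        · have : |a i j x - b i j| = a i j x - b i j := abs_of_pos (by linarith)
          rw [this] at hk
          linarith
        · exact hle'
    · have h6 := hi j
      rw [map_add] at h6
      linarith [hact ▸ h6]
  · intro hmem
    obtain ⟨i, hS, hA⟩ := mem_locC.1 hmem
    refine mem_ufc.2 ⟨i, fun j => ?_⟩
    rw [map_add]
    by_cases hact : a i j x = b i j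
    · have := hA j hact
      linarith
    · have hk := hkey i j y hy hact
      have hlt : a i j x < b i j := lt_of_le_of_ne (hS j) hact
      have habs : |a i j x - b i j| = b i j - a i j x := by
        rw [abs_of_neg (by linarith : a i j x - b i j < 0)]; ring
      rw [habs] at hk
      have h7 := le_abs_self (a i j y)
      linarith

/-- The tangent cone to a finite union of polyhedra. -/
lemma tcone_ufc (a : Fin p → Fin K → (E →L[ℝ] ℝ)) (b : Fin p → Fin K → ℝ) {x : E}
    (hx : x ∈ ufc a b) : tcone (ufc a b) x = locC a b x := by
  obtain ⟨ε, hεpos, hε⟩ := exists_eps a b x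
  ext u
  constructor
  · rintro ⟨-, t, w, htp, ht0, hw, hmem⟩
    have hsm : Tendsto (fun k => t k • w k) atTop (𝓝 (0 : E)) := by
      simpa using ht0.smul hw
    have hev : ∀ᶠ k in atTop, ‖t k • w k‖ < ε := by
      have := hsm.norm
      simp only [norm_zero] at this
      exact this.eventually_lt_const hεpos
    refine locC_closed.mem_of_tendsto hw (hev.mono fun k hk => ?_)
    have h1 : t k • w k ∈ locC a b x := (hε _ hk).1 (hmem k)
    have h2 := locC_smul (t := (t k)⁻¹) (inv_nonneg.2 (htp k).le) h1
    rwa [inv_smul_smul₀ (htp k).ne'] at h2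
  · intro hu
    set d := ε / (2 * (‖u‖ + 1)) with hd
    have hdpos : 0 < d := by positivity
    set c : ℕ → ℝ := fun k => d * (1 / ((k : ℝ) + 1)) with hc
    have hcpos : ∀ k, 0 < c k := fun k => by positivity
    have hcd : ∀ k, c k ≤ d := by
      intro k
      have h1 : (1 : ℝ) / ((k : ℝ) + 1) ≤ 1 := by
        rw [div_le_one (by positivity)]
        have : (0 : ℝ) ≤ (k : ℝ) := Nat.cast_nonneg k
        linarith
      calc c k = d * (1 / ((k : ℝ) + 1)) := rfl
        _ ≤ d * 1 := mul_le_mul_of_nonneg_left h1 hdpos.le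
        _ = d := mul_one d
    have hnorm : ∀ k, ‖c k • u‖ < ε := by
      intro k
      rw [norm_smul, Real.norm_eq_abs, abs_of_pos (hcpos k)]
      have h1 : c k * ‖u‖ ≤ d * ‖u‖ :=
        mul_le_mul_of_nonneg_right (hcd k) (norm_nonneg _)
      have h2 : d * (‖u‖ + 1) = ε / 2 := by
        rw [hd]; field_simp
      nlinarith [norm_nonneg u]
    have hc0 : Tendsto c atTop (𝓝 0) := by
      have := tendsto_one_div_add_atTop_nhds_zero_nat.const_mul d
      simpa [hc] using this
    refine ⟨hx, c, fun _ => u, hcpos, hc0, tendsto_const_nhds, fun k => ?_⟩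
    exact (hε _ (hnorm k)).2 (locC_smul (hcpos k).le hu)

/-- `fnc` only depends on the local structure, up to translation. -/
lemma fnc_sub_of_local {A B : Set E} {c d : E} {ε : ℝ} (hε : 0 < ε)
    (h : ∀ e : E, ‖e‖ < ε → (c + e ∈ A ↔ d + e ∈ B)) : fnc A c ⊆ fnc B d := by
  rintro ξ ⟨hcA, hcond⟩
  have hdB : d ∈ B := by
    have := (h 0 (by simpa using hε)).1 (by simpa using hcA)
    simpa using this
  refine ⟨hdB, fun ε' hε' => ?_⟩
  obtain ⟨δ, hδ, H⟩ := hcond ε' hε'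
  refine ⟨min δ ε, lt_min hδ hε, fun y hyB hnear => ?_⟩
  set e := y - d with he
  have heB : d + e ∈ B := by simp [he]; exact hyB
  have hesmall : ‖e‖ < ε := lt_of_lt_of_le hnear (min_le_right _ _)
  have heA : c + e ∈ A := (h e hesmall).2 heB
  have := H (c + e) heA (by simpa using lt_of_lt_of_le hnear (min_le_left _ _))
  simpa [he] using this

lemma fnc_eq_of_local {A B : Set E} {c d : E} {ε : ℝ} (hε : 0 < ε)
    (h : ∀ e : E, ‖e‖ < ε → (c + e ∈ A ↔ d + e ∈ B)) : fnc A c = fnc B d :=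
  le_antisymm (fnc_sub_of_local hε h)
    (fnc_sub_of_local hε (fun e he => (h e he).symm))

lemma fnc_shift {A C : Set E} {x : E} {ε : ℝ} (hε : 0 < ε)
    (h : ∀ y : E, ‖y‖ < ε → (x + y ∈ A ↔ y ∈ C)) {z : E} (hz : ‖z‖ < ε) :
    fnc A (x + z) = fnc C z := by
  refine fnc_eq_of_local (ε := ε - ‖z‖) (by linarith) fun e he => ?_
  have hze : ‖z + e‖ < ε := by
    calc ‖z + e‖ ≤ ‖z‖ + ‖e‖ := norm_add_le _ _
      _ < ε := by linarith
  rw [add_assoc]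
  exact h (z + e) hze

/-- The Fréchet normal cone to a cone at `0` is the polar. -/
lemma fnc_cone_zero {C : Set E} (h0 : (0 : E) ∈ C)
    (hs : ∀ t : ℝ, 0 < t → ∀ u ∈ C, t • u ∈ C) : fnc C 0 = pol C := by
  ext ξ
  constructor
  · rintro ⟨-, hcond⟩ u hu
    by_contra hpos
    push_neg at hpos
    have hεp : 0 < ξ u / (2 * (‖u‖ + 1)) := by positivity
    obtain ⟨δ, hδ, H⟩ := hcond _ hεp
    have htp : 0 < δ / (2 * (‖u‖ + 1)) := by positivity
    have hmem := hs _ htp u hu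
    have hn : 0 ≤ ‖u‖ := norm_nonneg _
    have hnear : ‖(δ / (2 * (‖u‖ + 1))) • u - 0‖ < δ := by
      rw [sub_zero, norm_smul, Real.norm_eq_abs, abs_of_pos htp,
        div_mul_eq_mul_div, div_lt_iff₀ (by positivity)]
      nlinarith
    have h9 := H _ hmem hnear
    rw [sub_zero, map_smul, smul_eq_mul, norm_smul, Real.norm_eq_abs,
      abs_of_pos htp] at h9
    have e0 : δ / (2 * (‖u‖ + 1)) * ξ u = δ * ξ u / (2 * (‖u‖ + 1)) := by ring
    have e1 : ξ u / (2 * (‖u‖ + 1)) * (δ / (2 * (‖u‖ + 1)) * ‖u‖)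
        = (δ * ξ u / (2 * (‖u‖ + 1))) * (‖u‖ / (2 * (‖u‖ + 1))) := by ring
    have e2 : ‖u‖ / (2 * (‖u‖ + 1)) < 1 := by
      rw [div_lt_one (by positivity)]; linarith
    have e3 : 0 < δ * ξ u / (2 * (‖u‖ + 1)) := by positivity
    rw [e0, e1] at h9
    nlinarith [mul_lt_mul_of_pos_left e2 e3]
  · intro hξ
    refine ⟨h0, fun ε' hε' => ⟨1, one_pos, fun y hy _ => ?_⟩⟩
    rw [sub_zero]
    calc ξ y ≤ 0 := hξ y hy
      _ ≤ ε' * ‖y‖ := by positivity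

lemma fnc_ufc0 (a : Fin p → Fin K → (E →L[ℝ] ℝ)) (b : Fin p → Fin K → ℝ) {x : E}
    (hx : x ∈ ufc a b) : fnc (ufc a b) x = pol (locC a b x) := by
  obtain ⟨ε, hεp, h⟩ := exists_eps a b x
  have h1 : fnc (ufc a b) x = fnc (locC a b x) 0 := by
    refine fnc_eq_of_local hεp fun e he => ?_
    rw [zero_add]
    exact h e he
  rw [h1]
  exact fnc_cone_zero (zero_mem_locC hx) (fun t ht u hu => locC_smul ht.le hu)

/-- The local cone is itself a finite union of polyhedral cones. -/
lemma locC_rep (a : Fin p → Fin K → (E →L[ℝ] ℝ)) (b : Fin p → Fin K → ℝ) {x : E}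
    (hx : x ∈ ufc a b) :
    ∃ a' : Fin p → Fin K → (E →L[ℝ] ℝ), locC a b x = ufc a' (fun _ _ => 0) := by
  classical
  obtain ⟨i0, hi0⟩ := mem_ufc.1 hx
  refine ⟨fun i j => if ∀ j', a i j' x ≤ b i j' then
      (if a i j x = b i j then a i j else 0)
    else (if a i0 j x = b i0 j then a i0 j else 0), ?_⟩
  ext u
  rw [mem_locC, mem_ufc]
  constructor
  · rintro ⟨i, hS, hA⟩
    refine ⟨i, fun j => ?_⟩
    rw [if_pos hS]
    by_cases hact : a i j x = b i j
    · rw [if_pos hact]; exact hA j hact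
    · rw [if_neg hact]; simp
  · rintro ⟨i, hi⟩
    by_cases hS : ∀ j', a i j' x ≤ b i j'
    · refine ⟨i, hS, fun j hact => ?_⟩
      have := hi j
      rwa [if_pos hS, if_pos hact] at this
    · refine ⟨i0, hi0, fun j hact => ?_⟩
      have := hi j
      rwa [if_neg hS, if_pos hact] at this

/-- Key pigeonhole lemma: a limit of Fréchet normals at points of a finite union
of polyhedral cones is a Fréchet normal at one of these points. -/
lemma limit_fnc (a : Fin p → Fin K → (E →L[ℝ] ℝ)) {xk : ℕ → E}
    {ξk : ℕ → E →L[ℝ] ℝ} {ξ : E →L[ℝ] ℝ} (hξ : Tendsto ξk atTop (𝓝 ξ))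
    (hmem : ∀ k, ξk k ∈ fnc (ufc a (fun _ _ => 0)) (xk k)) :
    ∃ v ∈ ufc a (fun _ _ => (0 : ℝ)), ξ ∈ fnc (ufc a (fun _ _ => 0)) v := by
  classical
  have hx : ∀ k, xk k ∈ ufc a (fun _ _ => 0) := fun k => (hmem k).1
  have hpol : ∀ k, ξk k ∈ pol (locC a (fun _ _ => 0) (xk k)) := fun k => by
    have h1 := fnc_ufc0 a (fun _ _ => 0) (hx k)
    rw [← h1]
    exact hmem k
  obtain ⟨q, hq⟩ := Finite.exists_infinite_fiber (fun k => pat a (fun _ _ => 0) (xk k))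
  have hqinf : {k | pat a (fun _ _ => 0) (xk k) = q}.Infinite := by
    exact Set.infinite_coe_iff.1 hq
  have hfreq : ∃ᶠ k in atTop, pat a (fun _ _ => 0) (xk k) = q :=
    Nat.frequently_atTop_iff_infinite.2 hqinf
  obtain ⟨k0, hk0⟩ := hqinf.nonempty
  have hk0' : pat a (fun _ _ => 0) (xk k0) = q := hk0
  refine ⟨xk k0, hx k0, ?_⟩
  rw [fnc_ufc0 a _ (hx k0)]
  intro w hw
  have hwq : w ∈ locP a q := by
    unfold locC at hw
    rwa [hk0'] at hw
  have htends : Tendsto (fun k => (ξk k) w) atTop (𝓝 (ξ w)) :=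
    ((ContinuousLinearMap.apply ℝ ℝ w).continuous.tendsto ξ).comp hξ
  refine (isClosed_Iic (a := (0 : ℝ))).mem_of_frequently_of_tendsto ?_ htends
  refine hfreq.mono fun k hk => ?_
  have h2 := hpol k
  unfold locC at h2
  rw [hk] at h2
  exact h2 w hwq

lemma exists_ufc_rep {Ω : Set E} (h : IsFinUnionPolyhedra Ω) :
    ∃ (p' K : ℕ) (a : Fin p' → Fin K → (E →L[ℝ] ℝ)) (b : Fin p' → Fin K → ℝ),
      Ω = ufc a b := by
  classical
  obtain ⟨p', P, hP, rfl⟩ := h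
  choose k A B hAB using hP
  set K := Finset.univ.sup k with hK
  have hkK : ∀ i, k i ≤ K := fun i => Finset.le_sup (Finset.mem_univ i)
  refine ⟨p', K, fun i j => if h : (j : ℕ) < k i then A i ⟨j, h⟩ else 0,
    fun i j => if h : (j : ℕ) < k i then B i ⟨j, h⟩ else 0, ?_⟩
  unfold ufc
  refine iUnion_congr fun i => ?_
  rw [hAB i]
  ext x
  simp only [mem_setOf_eq]
  constructor
  · intro h1 j
    by_cases hj : (j : ℕ) < k i
    · rw [dif_pos hj, dif_pos hj]; exact h1 _
    · rw [dif_neg hj, dif_neg hj]; simp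
  · intro h2 j
    have hj : (j : ℕ) < K := lt_of_lt_of_le j.isLt (hkK i)
    have := h2 ⟨j, hj⟩
    simpa using this

end Aux

/-- Lemma 2.2: the directional limiting normal cone to a finite union of convex
polyhedra is the union of the Fréchet normal cones to the second-order tangent
sets. -/
theorem stmt1 {n p : ℕ} (Ω : Set (Euc n)) (P : Fin p → Set (Euc n))
    (hpoly : ∀ i, IsPolyhedron (P i)) (hΩ : Ω = ⋃ i, P i)
    (xb u : Euc n) (hx : xb ∈ Ω) (hu : u ∈ tcone Ω xb) :
    dlnc Ω xb u = ⋃ v ∈ tcone (tcone Ω xb) u, fnc (tcone (tcone Ω xb) u) v := by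
  classical
  obtain ⟨p', K, a, b, rfl⟩ := Aux.exists_ufc_rep ⟨p, P, hpoly, hΩ⟩
  have hT := Aux.tcone_ufc a b hx
  obtain ⟨a1, hT1⟩ := Aux.locC_rep a b hx
  have hTu : tcone (Aux.ufc a b) xb = Aux.ufc a1 (fun _ _ => 0) := hT.trans hT1
  have hu1 : u ∈ Aux.ufc a1 (fun _ _ => 0) := by rw [← hTu]; exact hu
  have hT2 := Aux.tcone_ufc a1 (fun _ _ => 0) hu1
  obtain ⟨a2, hT2'⟩ := Aux.locC_rep a1 (fun _ _ => 0) hu1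
  have hT2u : tcone (Aux.ufc a1 fun _ _ => 0) u = Aux.ufc a2 (fun _ _ => 0) :=
    hT2.trans hT2'
  rw [hTu, hT2u]
  obtain ⟨ε1, hε1, hloc1⟩ := Aux.exists_eps a b xb
  obtain ⟨ε2, hε2, hloc2⟩ := Aux.exists_eps a1 (fun _ _ => 0) u
  have hloc1' : ∀ y : Euc n, ‖y‖ < ε1 →
      (xb + y ∈ Aux.ufc a b ↔ y ∈ Aux.ufc a1 (fun _ _ => 0)) :=
    fun y hy => (hloc1 y hy).trans (by rw [hT1])
  have hloc2' : ∀ y : Euc n, ‖y‖ < ε2 →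
      (u + y ∈ Aux.ufc a1 (fun _ _ => 0) ↔ y ∈ Aux.ufc a2 (fun _ _ => 0)) :=
    fun y hy => (hloc2 y hy).trans (by rw [hT2'])
  have fact1 : ∀ z : Euc n, ‖z‖ < ε1 →
      fnc (Aux.ufc a b) (xb + z) = fnc (Aux.ufc a1 fun _ _ => 0) z :=
    fun z hz => Aux.fnc_shift hε1 hloc1' hz
  have fact2 : ∀ z : Euc n, ‖z‖ < ε2 →
      fnc (Aux.ufc a1 fun _ _ => 0) (u + z) = fnc (Aux.ufc a2 fun _ _ => 0) z :=
    fun z hz => Aux.fnc_shift hε2 hloc2' hz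
  have fact3 : ∀ (a' : Fin p' → Fin K → (Euc n →L[ℝ] ℝ)) (t : ℝ), 0 < t →
      ∀ z ∈ Aux.ufc a' (fun _ _ => 0),
      fnc (Aux.ufc a' fun _ _ => 0) (t • z) = fnc (Aux.ufc a' fun _ _ => 0) z := by
    intro a' t ht z hz
    rw [Aux.fnc_ufc0 a' _ ((Aux.ufc0_smul_mem_iff ht).2 hz), Aux.fnc_ufc0 a' _ hz,
      Aux.locC_homog ht]
  ext ξ
  constructor
  · rintro ⟨hxΩ, t, w, ξk, htp, ht0, hw, hξk, hfk⟩
    have hsm : Tendsto (fun k => t k • w k) atTop (𝓝 (0 : Euc n)) := by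
      simpa using ht0.smul hw
    have hev1 : ∀ᶠ k in atTop, ‖t k • w k‖ < ε1 := by
      have h := hsm.norm
      simp only [norm_zero] at h
      exact h.eventually_lt_const hε1
    have hev2 : ∀ᶠ k in atTop, ‖w k - u‖ < ε2 := by
      have h : Tendsto (fun k => w k - u) atTop (𝓝 (0 : Euc n)) := by
        simpa using hw.sub (tendsto_const_nhds (x := u))
      have h2 := h.norm
      simp only [norm_zero] at h2
      exact h2.eventually_lt_const hε2
    obtain ⟨N, hN⟩ := Filter.eventually_atTop.1 (hev1.and hev2)
    have key : ∀ m : ℕ, ξk (m + N) ∈ fnc (Aux.ufc a2 fun _ _ => 0) (w (m + N) - u) := by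
      intro m
      obtain ⟨hk1, hk2⟩ := hN (m + N) (Nat.le_add_left N m)
      have h1 : ξk (m + N) ∈ fnc (Aux.ufc a1 fun _ _ => 0) (t (m + N) • w (m + N)) := by
        rw [← fact1 _ hk1]; exact hfk (m + N)
      have hwT : w (m + N) ∈ Aux.ufc a1 (fun _ _ => 0) :=
        (Aux.ufc0_smul_mem_iff (htp (m + N))).1 h1.1
      have h2 : ξk (m + N) ∈ fnc (Aux.ufc a1 fun _ _ => 0) (w (m + N)) := by
        rw [← fact3 a1 (t (m + N)) (htp (m + N)) _ hwT]; exact h1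
      have h3 : u + (w (m + N) - u) = w (m + N) := by abel
      rw [← fact2 _ hk2, h3]
      exact h2
    have hξ' : Tendsto (fun m => ξk (m + N)) atTop (𝓝 ξ) :=
      hξk.comp (tendsto_add_atTop_nat N)
    obtain ⟨v, hv, hξv⟩ := Aux.limit_fnc a2 hξ' key
    simp only [mem_iUnion]
    exact ⟨v, hv, hξv⟩
  · intro hmem
    simp only [mem_iUnion] at hmem
    obtain ⟨v, hv, hξ⟩ := hmem
    have hdpos : 0 < ε2 / (2 * (‖v‖ + 1)) := by positivity
    set c : ℕ → ℝ := fun k => (ε2 / (2 * (‖v‖ + 1))) * (1 / ((k : ℝ) + 1)) with hcdef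
    have hcpos : ∀ k, 0 < c k := fun k => by positivity
    have hone : ∀ k : ℕ, (1 : ℝ) / ((k : ℝ) + 1) ≤ 1 := by
      intro k
      rw [div_le_one (by positivity)]
      have : (0 : ℝ) ≤ (k : ℝ) := Nat.cast_nonneg k
      linarith
    have hcle : ∀ k, c k ≤ ε2 / (2 * (‖v‖ + 1)) := by
      intro k
      calc c k = (ε2 / (2 * (‖v‖ + 1))) * (1 / ((k : ℝ) + 1)) := rfl
        _ ≤ (ε2 / (2 * (‖v‖ + 1))) * 1 := mul_le_mul_of_nonneg_left (hone k) hdpos.le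
        _ = ε2 / (2 * (‖v‖ + 1)) := mul_one _
    have hcnorm : ∀ k, ‖c k • v‖ < ε2 := by
      intro k
      rw [norm_smul, Real.norm_eq_abs, abs_of_pos (hcpos k)]
      have h2 : (ε2 / (2 * (‖v‖ + 1))) * (‖v‖ + 1) = ε2 / 2 := by
        field_simp
      have h3 := mul_le_mul_of_nonneg_right (hcle k) (norm_nonneg v)
      nlinarith [norm_nonneg v, hdpos]
    set W : ℕ → Euc n := fun k => u + c k • v with hWdef
    have hvT2 : v ∈ Aux.ufc a2 (fun _ _ => 0) := hv
    have hWT : ∀ k, W k ∈ Aux.ufc a1 (fun _ _ => 0) := fun k =>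
      (hloc2' _ (hcnorm k)).2 (Aux.ufc0_smul_mem (hcpos k).le hvT2)
    have hfncw : ∀ k, ξ ∈ fnc (Aux.ufc a1 fun _ _ => 0) (W k) := by
      intro k
      show ξ ∈ fnc (Aux.ufc a1 fun _ _ => 0) (u + c k • v)
      rw [fact2 _ (hcnorm k), fact3 a2 (c k) (hcpos k) v hvT2]
      exact hξ
    set M : ℝ := ‖u‖ + (ε2 / (2 * (‖v‖ + 1))) * ‖v‖ + 1 with hMdef
    have hMpos : 0 < M := by positivity
    have hWM : ∀ k, ‖W k‖ < M := by
      intro k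
      calc ‖W k‖ ≤ ‖u‖ + ‖c k • v‖ := norm_add_le _ _
        _ = ‖u‖ + c k * ‖v‖ := by
            rw [norm_smul, Real.norm_eq_abs, abs_of_pos (hcpos k)]
        _ ≤ ‖u‖ + (ε2 / (2 * (‖v‖ + 1))) * ‖v‖ := by
            have := mul_le_mul_of_nonneg_right (hcle k) (norm_nonneg v)
            linarith
        _ < M := by rw [hMdef]; linarith
    set t : ℕ → ℝ := fun k => (ε1 / (2 * M)) * (1 / ((k : ℝ) + 1)) with htdef
    have htpos : ∀ k, 0 < t k := fun k => by positivity
    have htle : ∀ k, t k ≤ ε1 / (2 * M) := by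
      intro k
      calc t k = (ε1 / (2 * M)) * (1 / ((k : ℝ) + 1)) := rfl
        _ ≤ (ε1 / (2 * M)) * 1 := mul_le_mul_of_nonneg_left (hone k) (by positivity)
        _ = ε1 / (2 * M) := mul_one _
    have htnorm : ∀ k, ‖t k • W k‖ < ε1 := by
      intro k
      rw [norm_smul, Real.norm_eq_abs, abs_of_pos (htpos k)]
      have h1 : t k * ‖W k‖ < t k * M := mul_lt_mul_of_pos_left (hWM k) (htpos k)
      have h2 : t k * M ≤ (ε1 / (2 * M)) * M :=
        mul_le_mul_of_nonneg_right (htle k) hMpos.le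
      have h3 : (ε1 / (2 * M)) * M = ε1 / 2 := by field_simp
      exact (h1.trans_le (h2.trans h3.le)).trans (half_lt_self hε1)
    have hc0 : Tendsto c atTop (𝓝 0) := by
      have := tendsto_one_div_add_atTop_nhds_zero_nat.const_mul (ε2 / (2 * (‖v‖ + 1)))
      simpa [hcdef] using this
    have ht0 : Tendsto t atTop (𝓝 0) := by
      have := tendsto_one_div_add_atTop_nhds_zero_nat.const_mul (ε1 / (2 * M))
      simpa [htdef] using this
    have hWten : Tendsto W atTop (𝓝 u) := by
      have h1 : Tendsto (fun k => c k • v) atTop (𝓝 (0 : Euc n)) := by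
        simpa using hc0.smul_const v
      have h2 := (tendsto_const_nhds (x := u)).add h1
      simp only [add_zero] at h2
      simpa [hWdef] using h2
    refine ⟨hx, t, W, fun _ => ξ, htpos, ht0, hWten, tendsto_const_nhds, fun k => ?_⟩
    rw [fact1 _ (htnorm k), fact3 a1 (t k) (htpos k) _ (hWT k)]
    exact hfncw k
end
end

section
/- Let M : ℝ^n ⇉ ℝ^m be a set-valued map and (x̄,ȳ) ∈ gph M. Then M is metrically subregular at (x̄,ȳ) if and only if M is metrically subregular in every direction u ≠ 0 at (x̄,ȳ). -/
noncomputable section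

open Filter Topology Set

variable {E : Type*} [NormedAddCommGroup E] [NormedSpace ℝ E]
variable {Y : Type*} [NormedAddCommGroup Y] [NormedSpace ℝ Y]

/-- Lemma 2.7: metric subregularity is equivalent to metric subregularity in
every nonzero direction. -/
theorem stmt4 {n m : ℕ} (M : Euc n → Set (Euc m)) (xb : Euc n) (yb : Euc m)
    (hgraph : yb ∈ M xb) :
    SubregAt M xb yb ↔ ∀ u : Euc n, u ≠ 0 → SubregDir M xb yb u := by
  constructor
  · rintro ⟨-, κ, hκ, ε, hε, H⟩ u hu
    refine ⟨hgraph, ε/2, by linarith, 1, one_pos, κ, hκ, ?_⟩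
    rintro z ⟨hz1, -⟩
    have : dist (xb + z) xb < ε := by
      simp [dist_eq_norm]; linarith
    exact H _ this
  · intro h
    by_cases hn : ∃ u : Euc n, u ≠ 0
    · -- sphere nonempty
      have hsub : ∀ u ∈ Metric.sphere (0 : Euc n) 1, ∃ ρ, 0 < ρ ∧ ∃ δ, 0 < δ ∧ ∃ κ, 0 < κ ∧
          ∀ z ∈ dirNbhd u ρ δ,
            EMetric.infEdist (xb + z) {z' | yb ∈ M z'} ≤
              ENNReal.ofReal κ * EMetric.infEdist yb (M (xb + z)) := by
        intro u hu
        have hu' : u ≠ 0 := by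
          intro h0; rw [mem_sphere_zero_iff_norm, h0] at hu; simp at hu
        exact (h u hu').2
      choose ρ hρ δ hδ κ hκ H using hsub
      have hcov := (isCompact_sphere (0 : Euc n) 1).elim_nhds_subcover'
        (fun u hu => Metric.ball u (δ u hu)) (fun u hu => Metric.ball_mem_nhds u (hδ u hu))
      obtain ⟨t, ht⟩ := hcov
      obtain ⟨u0, hu0ne⟩ := hn
      have hsph : (u0 : Euc n) ≠ 0 := hu0ne
      have hu0mem : ‖u0‖⁻¹ • u0 ∈ Metric.sphere (0 : Euc n) 1 := by
        simp [norm_smul, norm_ne_zero_iff.mpr hu0ne, inv_mul_cancel₀ (norm_ne_zero_iff.mpr hu0ne)]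
      have htne : t.Nonempty := by
        rcases mem_iUnion₂.mp (ht hu0mem) with ⟨u, hu, -⟩
        exact ⟨u, hu⟩
      set ε := t.inf' htne (fun u => ρ u u.2) with hεdef
      set K := t.sup' htne (fun u => κ u u.2) with hKdef
      have hεpos : 0 < ε := by
        rw [hεdef, Finset.lt_inf'_iff]
        exact fun u hu => hρ u u.2
      have hKpos : 0 < K := by
        obtain ⟨u, hu⟩ := htne
        exact lt_of_lt_of_le (hκ u u.2) (Finset.le_sup' (fun u => κ u.1 u.2) hu)
      refine ⟨hgraph, K, hKpos, ε, hεpos, ?_⟩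
      intro x hx
      by_cases hz : x - xb = 0
      · have hxx : x = xb := by rwa [sub_eq_zero] at hz
        subst hxx
        rw [show EMetric.infEdist x {z | yb ∈ M z} = 0 from EMetric.infEdist_zero_of_mem hgraph]
        exact zero_le
      · obtain ⟨z, rfl⟩ : ∃ z : Euc n, x = xb + z := ⟨x - xb, by abel⟩
        have hz' : z ≠ 0 := by intro h0; apply hz; rw [h0]; abel
        have hznorm : ‖z‖ ≠ 0 := norm_ne_zero_iff.mpr hz'
        have hzn : ‖z‖⁻¹ • z ∈ Metric.sphere (0 : Euc n) 1 := by
          simp [norm_smul, inv_mul_cancel₀ hznorm]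
        rcases mem_iUnion₂.mp (ht hzn) with ⟨u, hu, hball⟩
        have huS := u.2
        have hunorm : ‖(u : Euc n)‖ = 1 := mem_sphere_zero_iff_norm.mp huS
        have hzmem : z ∈ dirNbhd (u : Euc n) (ρ u u.2) (δ u u.2) := by
          constructor
          · have : ‖z‖ = dist (xb + z) xb := by rw [dist_eq_norm]; congr 1; abel
            calc ‖z‖ = dist (xb + z) xb := this
              _ ≤ ε := le_of_lt hx
              _ ≤ ρ u u.2 := Finset.inf'_le _ hu
          · have hb : ‖‖z‖⁻¹ • z - (u : Euc n)‖ < δ u u.2 := by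
              rwa [Metric.mem_ball, dist_eq_norm] at hball
            have key : ‖(u:Euc n)‖ • z - ‖z‖ • (u:Euc n) = ‖z‖ • (‖z‖⁻¹ • z - (u:Euc n)) := by
              rw [smul_sub, smul_smul, mul_inv_cancel₀ hznorm, one_smul, hunorm, one_smul]
            rw [key, norm_smul, Real.norm_eq_abs, abs_of_nonneg (norm_nonneg z), hunorm]
            calc ‖z‖ * ‖‖z‖⁻¹ • z - (u:Euc n)‖ ≤ ‖z‖ * δ u u.2 := by
                  exact mul_le_mul_of_nonneg_left (le_of_lt hb) (norm_nonneg z)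
              _ = δ u u.2 * (‖z‖ * 1) := by ring
        refine le_trans (H u u.2 z hzmem) ?_
        exact mul_le_mul_left (ENNReal.ofReal_le_ofReal (Finset.le_sup' _ hu)) _
    · push_neg at hn
      refine ⟨hgraph, 1, one_pos, 1, one_pos, ?_⟩
      intro x hx
      have hxx : x = xb := by
        have := hn (x - xb); rwa [sub_eq_zero] at this
      subst hxx
      rw [show EMetric.infEdist x {z | yb ∈ M z} = 0 from EMetric.infEdist_zero_of_mem hgraph]
      exact zero_le
end
end

section
/- Let x̄ be a local minimizer of the disjunctive program (P). Then the multifunction 𝓜^{0,x̄} is not mixed metrically regular/subregular at (x̄,(0,0)), and for every nonzero critical direction 0 ≠ u ∈ 𝓒(x̄) there exists η ∈ ℝ^n such that 𝓜^{η,x̄} is not metrically subregular in direction u at (x̄,(0,0)). -/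
noncomputable section

open Filter Topology Set

variable {E : Type*} [NormedAddCommGroup E] [NormedSpace ℝ E]
variable {Y : Type*} [NormedAddCommGroup Y] [NormedSpace ℝ Y]

lemma feas_dir {m : ℕ} {Ω : Set (Euc m)} (hΩ : IsFinUnionPolyhedra Ω) {y v : Euc m}
    (hv : v ∈ tcone Ω y) : ∀ᶠ s in 𝓝[>] (0:ℝ), y + s • v ∈ Ω := by
  obtain ⟨p, P, hP, rfl⟩ := hΩ
  obtain ⟨hy, t, w, ht, ht0, hw, hmem⟩ := hv
  have hseq : Tendsto (fun k => y + t k • w k) atTop (𝓝 y) := by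
    have h2 : Tendsto (fun k => t k • w k) atTop (𝓝 ((0:ℝ) • v)) := ht0.smul hw
    simpa using tendsto_const_nhds.add h2
  obtain ⟨i, hi⟩ : ∃ i, ∃ᶠ k in atTop, y + t k • w k ∈ P i := by
    by_contra h
    push_neg at h
    obtain ⟨k, hk⟩ := (eventually_all.2 h).exists
    obtain ⟨i, hik⟩ := mem_iUnion.mp (hmem k)
    exact hk i hik
  obtain ⟨K, a, b, hPi⟩ := hP i
  rw [hPi] at hi
  have hyP : ∀ j, a j y ≤ b j := by
    have hcl : IsClosed {x : Euc m | ∀ j, a j x ≤ b j} := by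
      have h3 : {x : Euc m | ∀ j, a j x ≤ b j} = ⋂ j, (a j) ⁻¹' Set.Iic (b j) := by
        ext x; simp [Set.mem_iInter]
      rw [h3]
      exact isClosed_iInter fun j => (isClosed_Iic).preimage (a j).continuous
    exact hcl.closure_subset (mem_closure_of_frequently_of_tendsto hi hseq)
  have hsub : ∀ᶠ s in 𝓝[>] (0:ℝ), ∀ j, a j (y + s • v) ≤ b j := by
    rw [eventually_all]
    intro j
    have hexp : ∀ s : ℝ, ∀ z : Euc m, a j (y + s • z) = a j y + s * a j z := by
      intro s z; simp [map_add]
    by_cases hjv : a j v ≤ 0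
    · filter_upwards [self_mem_nhdsWithin] with s hs
      rw [hexp]
      nlinarith [hyP j, le_of_lt (mem_Ioi.mp hs)]
    · push_neg at hjv
      have hstrict : a j y < b j := by
        rcases lt_or_eq_of_le (hyP j) with h | h
        · exact h
        · exfalso
          have hfr : ∃ᶠ k in atTop, a j (w k) ∈ Set.Iic (0:ℝ) := by
            refine hi.mono fun k hk => ?_
            have h4 := hk j
            rw [hexp] at h4
            have h5 : t k * a j (w k) ≤ 0 := by linarith [h]
            have h6 := ht k
            exact mem_Iic.mpr (nonpos_of_mul_nonpos_right h5 h6)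
          have h7 : a j v ∈ Set.Iic (0:ℝ) :=
            isClosed_Iic.closure_subset (mem_closure_of_frequently_of_tendsto hfr
              (((a j).continuous.tendsto v).comp hw))
          linarith [mem_Iic.mp h7]
      have htend : Tendsto (fun s : ℝ => a j (y + s • v)) (𝓝 0) (𝓝 (a j y)) := by
        have hc : Continuous fun s : ℝ => a j (y + s • v) :=
          (a j).continuous.comp (continuous_const.add (continuous_id.smul continuous_const))
        simpa using hc.tendsto 0
      exact ((htend.eventually_lt_const hstrict).filter_mono nhdsWithin_le_nhds).mono
        fun s hs => le_of_lt hs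
  refine hsub.mono fun s hs => mem_iUnion.mpr ⟨i, ?_⟩
  rw [hPi]; exact hs
lemma lineLittleO {n : ℕ} {E : Type*} [NormedAddCommGroup E] [NormedSpace ℝ E]
    {g : Euc n → E} (hg : ContDiff ℝ 1 g) (xb u : Euc n) {c : ℝ} (hc : 0 < c) :
    ∀ᶠ s in 𝓝[>] (0:ℝ), ‖g (xb + s • u) - g xb - s • (fderiv ℝ g xb u)‖ ≤ c * s := by
  have hfd : HasFDerivAt g (fderiv ℝ g xb) xb := (hg.differentiable one_ne_zero xb).hasFDerivAt
  have hline : HasDerivAt (fun s : ℝ => xb + s • u) u 0 := by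
    simpa using ((hasDerivAt_id (0:ℝ)).smul_const u).const_add xb
  have hfd' : HasFDerivAt g (fderiv ℝ g xb) ((fun s : ℝ => xb + s • u) 0) := by
    simpa using hfd
  have hcomp : HasDerivAt (fun s : ℝ => g (xb + s • u)) (fderiv ℝ g xb u) 0 :=
    hfd'.comp_hasDerivAt 0 hline
  have hlo := hasDerivAt_iff_isLittleO.mp hcomp
  simp only [zero_smul, add_zero, sub_zero] at hlo
  have := (hlo.def hc).filter_mono (nhdsWithin_le_nhds (s := Set.Ioi (0:ℝ)))
  filter_upwards [this, self_mem_nhdsWithin] with s hs hs'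
  have : ‖s‖ = s := abs_of_pos (mem_Ioi.mp hs')
  rw [this] at hs
  simpa using hs
set_option maxHeartbeats 1000000
/-- Proposition 3.1: at a local minimizer, `𝓜^{0,x̄}` is not mixed metrically
regular/subregular at `(x̄,(0,0))`, and for every nonzero critical direction `u`
there is some `η` such that `𝓜^{η,x̄}` is not metrically subregular in
direction `u` at `(x̄,(0,0))`. -/
theorem stmt5 {n m : ℕ}
    (f : Euc n → ℝ) (F : Euc n → Euc m)
    (hf : ContDiff ℝ 1 f) (hF : ContDiff ℝ 1 F)
    (Ω : Set (Euc m)) (hΩ : IsFinUnionPolyhedra Ω)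
    (xb : Euc n) (hfeas : F xb ∈ Ω)
    (hmin : IsLocalMinOn f {x | F x ∈ Ω} xb) :
    ¬ MixedRegSubreg
        (cmap (fun x => f x - f xb + (inner ℝ (0 : Euc n) (x - xb) : ℝ) ^ 3)
          (Set.Iic (0 : ℝ)))
        (cmap F Ω) xb 0 0 ∧
    ∀ u : Euc n, u ≠ 0 →
      fderiv ℝ F xb u ∈ tcone Ω (F xb) → fderiv ℝ f xb u ≤ 0 →
      ∃ η : Euc n,
        ¬ SubregDir
            (fun x =>
              (cmap (fun x' => f x' - f xb + (inner ℝ η (x' - xb) : ℝ) ^ 3)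
                (Set.Iic (0 : ℝ)) x) ×ˢ (cmap F Ω x))
            xb 0 u := by
  have hrex : ∃ r > 0, ∀ z ∈ Metric.ball xb r ∩ {x | F x ∈ Ω}, f xb ≤ f z :=
    (Metric.nhdsWithin_basis_ball.eventually_iff).mp hmin
  obtain ⟨r, hr, hrmin⟩ := hrex
  constructor
  · rintro ⟨-, -, κ, hκ, ε, hε, hineq⟩
    set t : ℝ := min (ε / 2) (r / (2 * κ)) with htdef
    have ht : 0 < t := lt_min (by linarith) (by positivity)
    have key := hineq xb (-t) (by simpa using hε)
      (by
        rw [Real.dist_eq]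
        have : |(-t) - 0| = t := by rw [abs_of_nonpos (by linarith)]; ring
        rw [this]
        calc t ≤ ε / 2 := min_le_left _ _
          _ < ε := by linarith)
    -- lower bound on LHS
    have hA : ENNReal.ofReal r ≤ EMetric.infEdist xb
        {z | (-t) ∈ cmap (fun x => f x - f xb + (inner ℝ (0 : Euc n) (x - xb) : ℝ) ^ 3)
          (Set.Iic (0 : ℝ)) z ∧ (0 : Euc m) ∈ cmap F Ω z} := by
      refine EMetric.le_infEdist.mpr ?_
      intro z hz
      obtain ⟨hz1, hz2⟩ := hz
      simp only [cmap, Set.mem_setOf_eq, inner_zero_left, Set.mem_Iic, sub_zero] at hz1 hz2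
      have hz1' : f z + t ≤ f xb := by nlinarith [hz1]
      have hdist : r ≤ dist xb z := by
        by_contra hlt
        push_neg at hlt
        have := hrmin z ⟨Metric.mem_ball.mpr (by rwa [dist_comm]), hz2⟩
        linarith
      calc ENNReal.ofReal r ≤ ENNReal.ofReal (dist xb z) := ENNReal.ofReal_le_ofReal hdist
        _ = edist xb z := (edist_dist _ _).symm
    -- upper bound on RHS
    have hB : EMetric.infEdist ((-t : ℝ), (0 : Euc m))
        ((cmap (fun x => f x - f xb + (inner ℝ (0 : Euc n) (x - xb) : ℝ) ^ 3)
          (Set.Iic (0 : ℝ)) xb) ×ˢ (cmap F Ω xb)) ≤ ENNReal.ofReal t := by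
      have hmem : ((0 : ℝ), (0 : Euc m)) ∈
          ((cmap (fun x => f x - f xb + (inner ℝ (0 : Euc n) (x - xb) : ℝ) ^ 3)
            (Set.Iic (0 : ℝ)) xb) ×ˢ (cmap F Ω xb)) := by
        constructor
        · simp [cmap]
        · simpa [cmap] using hfeas
      refine le_trans (EMetric.infEdist_le_edist_of_mem hmem) ?_
      rw [Prod.edist_eq]
      simp only [edist_self]
      rw [edist_dist, Real.dist_eq]
      have : |(-t) - 0| = t := by rw [abs_of_nonpos (by linarith)]; ring
      rw [this]
      simp
    have hfinal : ENNReal.ofReal r ≤ ENNReal.ofReal (κ * t) := by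
      calc ENNReal.ofReal r ≤ _ := hA
        _ ≤ ENNReal.ofReal κ * EMetric.infEdist ((-t : ℝ), (0 : Euc m)) _ := key
        _ ≤ ENNReal.ofReal κ * ENNReal.ofReal t := by
            exact mul_le_mul_right hB _
        _ = ENNReal.ofReal (κ * t) := (ENNReal.ofReal_mul hκ.le).symm
    have hle : r ≤ κ * t := by
      have := (ENNReal.ofReal_le_ofReal_iff (by positivity)).mp hfinal
      exact this
    have h8 : t ≤ r / (2 * κ) := min_le_right _ _
    have h9 : κ * t ≤ r / 2 := by
      calc κ * t ≤ κ * (r / (2 * κ)) := mul_le_mul_of_nonneg_left h8 hκ.le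
        _ = r / 2 := by field_simp
    linarith
  · intro u hu hu1 hu2
    refine ⟨u, ?_⟩
    rintro ⟨-, ρ, hρ, δ, hδ, κ, hκ, hsub⟩
    have hun : (0:ℝ) < ‖u‖ := norm_pos_iff.mpr hu
    set c : ℝ := ‖u‖ / (2 * κ) with hcdef
    have hc : (0:ℝ) < c := by positivity
    have hΩdir : ∀ᶠ s in 𝓝[>] (0:ℝ), F xb + s • (fderiv ℝ F xb u) ∈ Ω := feas_dir hΩ hu1
    have hFo := lineLittleO hF xb u hc
    have hfo := lineLittleO hf xb u (show (0:ℝ) < c / 2 by positivity)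
    have hmul : Tendsto (fun t : ℝ => t * ‖u‖) (𝓝[>] (0:ℝ)) (𝓝 0) := by
      have h0 : Tendsto (fun t : ℝ => t * ‖u‖) (𝓝 (0:ℝ)) (𝓝 (0 * ‖u‖)) :=
        (continuous_id.mul continuous_const).tendsto 0
      rw [zero_mul] at h0
      exact h0.mono_left nhdsWithin_le_nhds
    have hquad : Tendsto (fun t : ℝ => t ^ 2 * ‖u‖ ^ 6) (𝓝[>] (0:ℝ)) (𝓝 0) := by
      have h0 : Tendsto (fun t : ℝ => t ^ 2 * ‖u‖ ^ 6) (𝓝 (0:ℝ)) (𝓝 (0 ^ 2 * ‖u‖ ^ 6)) :=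
        ((continuous_pow 2).mul continuous_const).tendsto 0
      simp only [ne_eq, OfNat.ofNat_ne_zero, not_false_eq_true, zero_pow, zero_mul] at h0
      exact h0.mono_left nhdsWithin_le_nhds
    have h1 : ∀ᶠ t in 𝓝[>] (0:ℝ), t * ‖u‖ < ρ := hmul.eventually_lt_const hρ
    have h2 : ∀ᶠ t in 𝓝[>] (0:ℝ), t * ‖u‖ < r / 2 := hmul.eventually_lt_const (by linarith)
    have h3 : ∀ᶠ t in 𝓝[>] (0:ℝ), t ^ 2 * ‖u‖ ^ 6 < c / 2 := hquad.eventually_lt_const (by positivity)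
    have hpos : ∀ᶠ t : ℝ in 𝓝[>] (0:ℝ), 0 < t :=
      eventually_nhdsWithin_of_forall fun t ht => Set.mem_Ioi.mp ht
    obtain ⟨t, htpos, hΩt, hFt, hft, h1t, h2t, h3t⟩ :=
      (hpos.and (hΩdir.and (hFo.and (hfo.and (h1.and (h2.and h3)))))).exists
    -- z = t • u is in the directional neighborhood
    have hznorm : ‖t • u‖ = t * ‖u‖ := by
      rw [norm_smul, Real.norm_eq_abs, abs_of_pos htpos]
    have hzmem : t • u ∈ dirNbhd u ρ δ := by
      constructor
      · rw [hznorm]; exact h1t.le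
      · have hz0 : ‖u‖ • (t • u) - ‖t • u‖ • u = 0 := by
          rw [hznorm, smul_smul, mul_comm, sub_self]
        rw [hz0, norm_zero]
        positivity
    have key := hsub (t • u) hzmem
    -- notation
    set x : Euc n := xb + t • u with hxdef
    -- inner product along the line
    have hinner : (inner ℝ u (x - xb) : ℝ) = t * ‖u‖ ^ 2 := by
      have hx : x - xb = t • u := by rw [hxdef]; abel
      rw [hx, real_inner_smul_right, real_inner_self_eq_norm_sq]
    -- LHS lower bound
    have hLHS : ENNReal.ofReal (t * ‖u‖) ≤ EMetric.infEdist x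
        {z' | (0 : ℝ × Euc m) ∈
          (cmap (fun x' => f x' - f xb + (inner ℝ u (x' - xb) : ℝ) ^ 3) (Set.Iic (0:ℝ)) z') ×ˢ
            (cmap F Ω z')} := by
      refine EMetric.le_infEdist.mpr ?_
      intro z' hz'
      simp only [Set.mem_setOf_eq, Set.mem_prod, cmap, Prod.fst_zero, Prod.snd_zero,
        Set.mem_Iic, sub_zero] at hz'
      obtain ⟨hg, hfeas'⟩ := hz'
      have hbound : t * ‖u‖ ≤ dist x z' := by
        by_cases hnear : dist z' xb < r
        · have hmin' : f xb ≤ f z' := hrmin z' ⟨Metric.mem_ball.mpr hnear, hfeas'⟩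
          have hcube : (inner ℝ u (z' - xb) : ℝ) ≤ 0 := by
            by_contra hpos
            push_neg at hpos
            nlinarith [pow_pos hpos 3]
          have hdiff : (inner ℝ u (x - z') : ℝ) = t * ‖u‖ ^ 2 - inner ℝ u (z' - xb) := by
            have : x - z' = (x - xb) - (z' - xb) := by abel
            rw [this, inner_sub_right, hinner]
          have hcs : (inner ℝ u (x - z') : ℝ) ≤ ‖u‖ * ‖x - z'‖ := real_inner_le_norm u _
          have : t * ‖u‖ ^ 2 ≤ ‖u‖ * ‖x - z'‖ := by
            rw [hdiff] at hcs; linarith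
          have hnn : t * ‖u‖ ≤ ‖x - z'‖ := by
            nlinarith
          rwa [dist_eq_norm]
        · push_neg at hnear
          have hd1 : dist x xb = t * ‖u‖ := by
            rw [hxdef, dist_eq_norm, add_sub_cancel_left, hznorm]
          have : r ≤ dist z' xb := hnear
          have htri : dist z' xb ≤ dist z' x + dist x xb := dist_triangle _ _ _
          have : r / 2 ≤ dist z' x := by
            rw [hd1] at htri; linarith
          rw [dist_comm] at this
          linarith
      calc ENNReal.ofReal (t * ‖u‖) ≤ ENNReal.ofReal (dist x z') :=
            ENNReal.ofReal_le_ofReal hbound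
        _ = edist x z' := (edist_dist _ _).symm
    -- RHS upper bound
    have hRHS : EMetric.infEdist (0 : ℝ × Euc m)
        ((cmap (fun x' => f x' - f xb + (inner ℝ u (x' - xb) : ℝ) ^ 3) (Set.Iic (0:ℝ)) x) ×ˢ
          (cmap F Ω x)) ≤ ENNReal.ofReal (c * t) := by
      set G : ℝ := f x - f xb + (inner ℝ u (x - xb) : ℝ) ^ 3 with hGdef
      set y₁ : ℝ := max G 0 with hy1def
      set y₂ : Euc m := F x - (F xb + t • (fderiv ℝ F xb u)) with hy2def
      have hmem : (y₁, y₂) ∈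
          ((cmap (fun x' => f x' - f xb + (inner ℝ u (x' - xb) : ℝ) ^ 3) (Set.Iic (0:ℝ)) x) ×ˢ
            (cmap F Ω x)) := by
        constructor
        · simp only [cmap, Set.mem_setOf_eq, Set.mem_Iic]
          have : G ≤ y₁ := le_max_left _ _
          linarith
        · simp only [cmap, Set.mem_setOf_eq, hy2def]
          simpa using hΩt
      refine le_trans (EMetric.infEdist_le_edist_of_mem hmem) ?_
      rw [Prod.edist_eq]
      have hGle : G ≤ c * t := by
        have hft' : |f x - f xb - t • (fderiv ℝ f xb u)| ≤ c / 2 * t := by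
          simpa [Real.norm_eq_abs] using hft
        have hft'' : f x - f xb - t * (fderiv ℝ f xb u) ≤ c / 2 * t :=
          le_trans (le_abs_self _) (by simpa [smul_eq_mul] using hft')
        have hDf : t * (fderiv ℝ f xb u) ≤ 0 :=
          mul_nonpos_of_nonneg_of_nonpos htpos.le hu2
        have hcube' : (inner ℝ u (x - xb) : ℝ) ^ 3 ≤ c / 2 * t := by
          rw [hinner]
          have : (t * ‖u‖ ^ 2) ^ 3 = (t ^ 2 * ‖u‖ ^ 6) * t := by ring
          rw [this]
          nlinarith [h3t, htpos]
        rw [hGdef]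
        linarith
      have hy1le : edist (0:ℝ) y₁ ≤ ENNReal.ofReal (c * t) := by
        rw [edist_dist, Real.dist_eq]
        apply ENNReal.ofReal_le_ofReal
        rw [abs_sub_comm, sub_zero, abs_of_nonneg (le_max_right G 0)]
        exact max_le hGle (by positivity)
      have hy2le : edist (0 : Euc m) y₂ ≤ ENNReal.ofReal (c * t) := by
        rw [edist_dist, dist_eq_norm, zero_sub, norm_neg]
        apply ENNReal.ofReal_le_ofReal
        have : y₂ = F (xb + t • u) - F xb - t • (fderiv ℝ F xb u) := by
          rw [hy2def, hxdef]; abel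
        rw [this]
        exact hFt
      exact max_le hy1le hy2le
    -- combine
    have hfin : ENNReal.ofReal (t * ‖u‖) ≤ ENNReal.ofReal (κ * (c * t)) := by
      calc ENNReal.ofReal (t * ‖u‖) ≤ _ := hLHS
        _ ≤ ENNReal.ofReal κ * EMetric.infEdist (0 : ℝ × Euc m) _ := key
        _ ≤ ENNReal.ofReal κ * ENNReal.ofReal (c * t) := mul_le_mul_right hRHS _
        _ = ENNReal.ofReal (κ * (c * t)) := (ENNReal.ofReal_mul hκ.le).symm
    have hle : t * ‖u‖ ≤ κ * (c * t) := by
      exact (ENNReal.ofReal_le_ofReal_iff (by positivity)).mp hfin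
    have heq : κ * (c * t) = t * ‖u‖ / 2 := by
      rw [hcdef]; field_simp
    rw [heq] at hle
    nlinarith [mul_pos htpos hun]
end
end

section
/- Let x̄ be feasible for the disjunctive program (P) with a fixed splitting F = (F₁,F₂), Ω = Ω₁ × Ω₂. Then for every λ₀ ≥ 0 and every critical direction u ∈ 𝓒(x̄) the chain of inclusions Λ̂^{λ₀}(x̄;0) ⊆ Λ̂^{λ₀}(x̄;u) ⊆ Λ^{λ₀}(x̄;u) ⊆ Λ^{λ₀}(x̄;0) holds, and all inclusions hold with equality if Ω consists of a single convex polyhedron. -/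
noncomputable section

open Filter Topology Set

variable {E : Type*} [NormedAddCommGroup E] [NormedSpace ℝ E]
variable {Y : Type*} [NormedAddCommGroup Y] [NormedSpace ℝ Y]

/-- The pair mapping `F = (F₁,F₂)`. -/
def PairMap {n m₁ m₂ : ℕ} (F₁ : Euc n → Euc m₁) (F₂ : Euc n → Euc m₂) :
    Euc n → Euc m₁ × Euc m₂ := fun x => (F₁ x, F₂ x)

/-- The multiplier set `Λ^{λ₀}(x̄;u)` for the splitting `F = (F₁,F₂)`,
`Ω = Ω₁ × Ω₂`: multipliers `λ = (λ₁,λ₂)` in the directional limiting normal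
cone with vanishing gradient of the generalized Lagrangian and
`λ₀ + ‖λ₁‖ ≠ 0`. -/
def Lam {n m₁ m₂ : ℕ} (f : Euc n → ℝ) (F₁ : Euc n → Euc m₁) (F₂ : Euc n → Euc m₂)
    (Ω₁ : Set (Euc m₁)) (Ω₂ : Set (Euc m₂)) (xb u : Euc n) (l0 : ℝ) :
    Set ((Euc m₁ × Euc m₂) →L[ℝ] ℝ) :=
  {μ | μ ∈ dlnc (Ω₁ ×ˢ Ω₂) (PairMap F₁ F₂ xb) (fderiv ℝ (PairMap F₁ F₂) xb u) ∧
    l0 • fderiv ℝ f xb + μ.comp (fderiv ℝ (PairMap F₁ F₂) xb) = 0 ∧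
    l0 + ‖μ.comp (ContinuousLinearMap.inl ℝ (Euc m₁) (Euc m₂))‖ ≠ 0}

/-- The multiplier set `Λ̂^{λ₀}(x̄;u)`: as `Λ^{λ₀}(x̄;u)` but with the Fréchet
normal cone to the tangent cone. -/
def LamHat {n m₁ m₂ : ℕ} (f : Euc n → ℝ) (F₁ : Euc n → Euc m₁) (F₂ : Euc n → Euc m₂)
    (Ω₁ : Set (Euc m₁)) (Ω₂ : Set (Euc m₂)) (xb u : Euc n) (l0 : ℝ) :
    Set ((Euc m₁ × Euc m₂) →L[ℝ] ℝ) :=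
  {μ | μ ∈ fnc (tcone (Ω₁ ×ˢ Ω₂) (PairMap F₁ F₂ xb)) (fderiv ℝ (PairMap F₁ F₂) xb u) ∧
    l0 • fderiv ℝ f xb + μ.comp (fderiv ℝ (PairMap F₁ F₂) xb) = 0 ∧
    l0 + ‖μ.comp (ContinuousLinearMap.inl ℝ (Euc m₁) (Euc m₂))‖ ≠ 0}

/-- A set `C` is a "good cone" for `Ω` at `x`: closed, positively homogeneous, and
locally `Ω = x + C`. -/
def GoodCone (Ω : Set E) (x : E) (C : Set E) : Prop :=
  IsClosed C ∧ (∀ s : ℝ, 0 < s → ∀ u ∈ C, s • u ∈ C) ∧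
    ∃ ρ : ℝ, 0 < ρ ∧ ∀ y : E, ‖y - x‖ < ρ → (y ∈ Ω ↔ y - x ∈ C)

lemma tendsto_halfpow (c : ℝ) : Tendsto (fun k : ℕ => c * (1/2:ℝ)^k) atTop (𝓝 0) := by
  simpa using (tendsto_pow_atTop_nhds_zero_of_lt_one (by norm_num) (by norm_num : (1/2:ℝ) < 1)).const_mul c


lemma tcone_smul_mem {Ω : Set E} {x u : E} {s : ℝ} (hs : 0 < s) (hu : u ∈ tcone Ω x) :
    s • u ∈ tcone Ω x := by
  obtain ⟨hx, t, w, htpos, ht0, hw, hmem⟩ := hu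
  refine ⟨hx, fun k => t k / s, fun k => s • w k, fun k => div_pos (htpos k) hs,
    by simpa using ht0.div_const s, ((continuous_const_smul s).tendsto u).comp hw, fun k => ?_⟩
  have : (t k / s) • (s • w k) = t k • w k := by
    rw [smul_smul, div_mul_cancel₀]; exact hs.ne'
  rw [this]; exact hmem k


lemma zero_mem_tcone {Ω : Set E} {x : E} (hx : x ∈ Ω) : 0 ∈ tcone Ω x := by
  refine ⟨hx, fun k => (1/2:ℝ)^k, fun _ => 0, fun k => by positivity,
    by simpa using tendsto_halfpow (1:ℝ), tendsto_const_nhds, fun k => by simpa using hx⟩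




lemma GoodCone.tcone_eq {Ω : Set E} {x : E} {C : Set E} (h : GoodCone Ω x C)
    (hx : x ∈ Ω) : tcone Ω x = C := by
  obtain ⟨hcl, hsc, ρ, hρ, hloc⟩ := h
  ext u
  constructor
  · rintro ⟨-, t, w, htpos, ht0, hw, hmem⟩
    have htw : Tendsto (fun k => t k • w k) atTop (𝓝 0) := by
      simpa using ht0.smul hw
    have hev : ∀ᶠ k in atTop, w k ∈ C := by
      filter_upwards [(tendsto_iff_norm_sub_tendsto_zero.mp htw).eventually
        (eventually_lt_nhds hρ)] with k hk
      have h1 : ‖(x + t k • w k) - x‖ < ρ := by simpa using hk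
      have h2 : t k • w k ∈ C := by
        have := (hloc _ h1).mp (hmem k); simpa using this
      have := hsc (t k)⁻¹ (inv_pos.mpr (htpos k)) _ h2
      simpa [smul_smul, inv_mul_cancel₀ (htpos k).ne'] using this
    exact hcl.mem_of_tendsto hw hev
  · intro hu
    set c : ℝ := ρ / (2 * (‖u‖ + 1)) with hc
    have hcpos : 0 < c := by positivity
    refine ⟨hx, fun k => c * (1/2:ℝ)^k, fun _ => u, fun k => by positivity,
      tendsto_halfpow c, tendsto_const_nhds, fun k => ?_⟩
    set t := c * (1/2:ℝ)^k with htdef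
    have htpos : 0 < t := by positivity
    have htle : t ≤ c := by
      have : (1/2:ℝ)^k ≤ 1 := pow_le_one₀ (by norm_num) (by norm_num)
      nlinarith
    have hnorm : ‖(x + t • u) - x‖ < ρ := by
      have h1 : ‖t • u‖ = t * ‖u‖ := by rw [norm_smul, Real.norm_of_nonneg htpos.le]
      have h2 : t * ‖u‖ ≤ c * ‖u‖ := by nlinarith [norm_nonneg u]
      have h3 : c * ‖u‖ < ρ := by
        rw [hc]; rw [div_mul_eq_mul_div, div_lt_iff₀ (by positivity)]
        nlinarith [norm_nonneg u]
      simp only [add_sub_cancel_left]; linarith [h1, h2, h3]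
    exact (hloc _ hnorm).mpr (by simpa using hsc t htpos u hu)


lemma IsPolyhedron.isClosed {P : Set E} (h : IsPolyhedron P) : IsClosed P := by
  obtain ⟨k, a, b, rfl⟩ := h
  have : {x : E | ∀ j, a j x ≤ b j} = ⋂ j, (a j) ⁻¹' (Iic (b j)) := by
    ext x; simp [Set.mem_iInter]
  rw [this]
  exact isClosed_iInter fun j => isClosed_Iic.preimage (a j).continuous


lemma IsPolyhedron.goodCone {P : Set E} {x : E} (h : IsPolyhedron P) (hx : x ∈ P) :
    ∃ C : Set E, Convex ℝ C ∧ GoodCone P x C := by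
  obtain ⟨k, a, b, rfl⟩ := h
  refine ⟨{u | ∀ j, a j x = b j → a j u ≤ 0}, ?_, ?_, ?_, ?_⟩
  · intro u hu v hv s t hs ht hst j hj
    have := hu j hj; have := hv j hj
    simp only [map_add, map_smul, smul_eq_mul]
    nlinarith
  · have : {u : E | ∀ j, a j x = b j → a j u ≤ 0} =
        ⋂ j, {u | a j x = b j → a j u ≤ 0} := by ext u; simp [Set.mem_iInter]
    rw [this]
    refine isClosed_iInter fun j => ?_
    by_cases hj : a j x = b j
    · simp only [hj, forall_const]
      exact isClosed_Iic.preimage (a j).continuous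
    · have : {u : E | a j x = b j → a j u ≤ 0} = univ := by
        ext u; simp [hj]
      rw [this]; exact isClosed_univ
  · intro s hs u hu j hj
    have := hu j hj
    simp only [map_smul, smul_eq_mul]
    nlinarith
  · -- local identity
    have hopen : IsOpen {y : E | ∀ j, a j x < b j → a j y < b j} := by
      have : {y : E | ∀ j, a j x < b j → a j y < b j} =
          ⋂ j, {y | a j x < b j → a j y < b j} := by ext y; simp [Set.mem_iInter]
      rw [this]
      refine isOpen_iInter_of_finite fun j => ?_
      by_cases hj : a j x < b j
      · simp only [hj, forall_const]
        exact isOpen_Iio.preimage (a j).continuous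
      · have : {y : E | a j x < b j → a j y < b j} = univ := by ext y; simp [hj]
        rw [this]; exact isOpen_univ
    obtain ⟨ρ, hρ, hball⟩ := Metric.isOpen_iff.mp hopen x (fun j hj => hj)
    refine ⟨ρ, hρ, fun y hy => ?_⟩
    have hyU : ∀ j, a j x < b j → a j y < b j := by
      have : y ∈ Metric.ball x ρ := by
        simpa [Metric.mem_ball, dist_eq_norm] using hy
      exact hball this
    constructor
    · intro hyP j hj
      have := hyP j
      simp only [map_sub]; linarith [hj]
    · intro hC j
      rcases lt_or_eq_of_le (hx j) with hlt | heq
      · exact (hyU j hlt).le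
      · have := hC j heq
        simp only [map_sub] at this
        linarith


lemma goodCone_union {Ω : Set E} {x : E} (h : IsFinUnionPolyhedra Ω) (hx : x ∈ Ω) :
    ∃ C : Set E, GoodCone Ω x C := by
  obtain ⟨p, P, hP, rfl⟩ := h
  -- choose data for each index
  have hchoice : ∀ i : Fin p, ∃ D : Set E, ∃ ρ : ℝ, 0 < ρ ∧ IsClosed D ∧
      (∀ s : ℝ, 0 < s → ∀ u ∈ D, s • u ∈ D) ∧ (x ∉ P i → D = ∅) ∧
      ∀ y : E, ‖y - x‖ < ρ → (y ∈ P i ↔ y - x ∈ D) := by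
    intro i
    by_cases hxi : x ∈ P i
    · obtain ⟨C, -, hcl, hsc, ρ, hρ, hloc⟩ := (hP i).goodCone hxi
      exact ⟨C, ρ, hρ, hcl, hsc, fun h => absurd hxi h, hloc⟩
    · -- x not in closed P i : small ball misses P i
      have hcl := (hP i).isClosed
      have : ∃ ρ > 0, ∀ y : E, ‖y - x‖ < ρ → y ∉ P i := by
        obtain ⟨ρ, hρ, hb⟩ := Metric.isOpen_iff.mp hcl.isOpen_compl x hxi
        exact ⟨ρ, hρ, fun y hy => hb (by simpa [Metric.mem_ball, dist_eq_norm] using hy)⟩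
      obtain ⟨ρ, hρ, hmiss⟩ := this
      refine ⟨∅, ρ, hρ, isClosed_empty, by simp, fun _ => rfl, fun y hy => ?_⟩
      simp [hmiss y hy]
  choose D ρ hρpos hDcl hDsc hDempty hDloc using hchoice
  -- a uniform radius
  have hex : ∃ r > 0, ∀ i, r ≤ ρ i := by
    rcases isEmpty_or_nonempty (Fin p) with hemp | hne
    · exact ⟨1, one_pos, fun i => (hemp.false i).elim⟩
    · refine ⟨Finset.univ.inf' (Finset.univ_nonempty_iff.mpr hne) ρ, ?_, fun i => Finset.inf'_le _ (Finset.mem_univ i)⟩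
      rw [gt_iff_lt, Finset.lt_inf'_iff]
      exact fun i _ => hρpos i
  obtain ⟨r, hr, hrle⟩ := hex
  refine ⟨⋃ i, D i, isClosed_iUnion_of_finite hDcl, ?_, r, hr, fun y hy => ?_⟩
  · rintro s hs u hu
    obtain ⟨i, hi⟩ := Set.mem_iUnion.mp hu
    exact Set.mem_iUnion.mpr ⟨i, hDsc i s hs u hi⟩
  · constructor
    · intro hyΩ
      obtain ⟨i, hi⟩ := Set.mem_iUnion.mp hyΩ
      exact Set.mem_iUnion.mpr ⟨i, (hDloc i y (lt_of_lt_of_le hy (hrle i))).mp hi⟩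
    · intro hC
      obtain ⟨i, hi⟩ := Set.mem_iUnion.mp hC
      exact Set.mem_iUnion.mpr ⟨i, (hDloc i y (lt_of_lt_of_le hy (hrle i))).mpr hi⟩


lemma GoodCone.prod {Y : Type*} [NormedAddCommGroup Y] [NormedSpace ℝ Y]
    {Ω₁ : Set E} {Ω₂ : Set Y} {x₁ : E} {x₂ : Y} {C₁ : Set E} {C₂ : Set Y}
    (h₁ : GoodCone Ω₁ x₁ C₁) (h₂ : GoodCone Ω₂ x₂ C₂) :
    GoodCone (Ω₁ ×ˢ Ω₂) (x₁, x₂) (C₁ ×ˢ C₂) := by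
  obtain ⟨hcl₁, hsc₁, ρ₁, hρ₁, hloc₁⟩ := h₁
  obtain ⟨hcl₂, hsc₂, ρ₂, hρ₂, hloc₂⟩ := h₂
  refine ⟨hcl₁.prod hcl₂, ?_, min ρ₁ ρ₂, lt_min hρ₁ hρ₂, fun y hy => ?_⟩
  · rintro s hs u ⟨hu₁, hu₂⟩
    exact ⟨hsc₁ s hs _ hu₁, hsc₂ s hs _ hu₂⟩
  · have h1 : ‖y.1 - x₁‖ < ρ₁ :=
      lt_of_le_of_lt (by simpa using norm_fst_le (y - (x₁, x₂))) (lt_of_lt_of_le hy (min_le_left _ _))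
    have h2 : ‖y.2 - x₂‖ < ρ₂ :=
      lt_of_le_of_lt (by simpa using norm_snd_le (y - (x₁, x₂))) (lt_of_lt_of_le hy (min_le_right _ _))
    constructor
    · rintro ⟨hy₁, hy₂⟩
      exact ⟨(hloc₁ _ h1).mp hy₁, (hloc₂ _ h2).mp hy₂⟩
    · rintro ⟨hy₁, hy₂⟩
      exact ⟨(hloc₁ _ h1).mpr hy₁, (hloc₂ _ h2).mpr hy₂⟩


lemma fnc_zero_nonpos {T : Set E} (hsc : ∀ s : ℝ, 0 < s → ∀ u ∈ T, s • u ∈ T)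
    {μ : E →L[ℝ] ℝ} (hμ : μ ∈ fnc T 0) {y : E} (hy : y ∈ T) : μ y ≤ 0 := by
  obtain ⟨h0, hfnc⟩ := hμ
  have key : ∀ ε : ℝ, 0 < ε → μ y ≤ ε * ‖y‖ := by
    intro ε hε
    obtain ⟨δ, hδ, hprop⟩ := hfnc ε hε
    set s : ℝ := δ / (2 * (‖y‖ + 1)) with hs
    have hspos : 0 < s := by positivity
    have hmem : s • y ∈ T := hsc s hspos y hy
    have hnorm : ‖s • y - 0‖ < δ := by
      rw [sub_zero, norm_smul, Real.norm_of_nonneg hspos.le, hs]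
      rw [div_mul_eq_mul_div, div_lt_iff₀ (by positivity)]
      nlinarith [norm_nonneg y]
    have := hprop (s • y) hmem hnorm
    rw [sub_zero, map_smul, smul_eq_mul, norm_smul, Real.norm_of_nonneg hspos.le] at this
    have := (mul_le_mul_iff_right₀ hspos).mp (by linarith [this] : s * μ y ≤ s * (ε * ‖y‖))
    linarith
  by_contra h
  push_neg at h
  have hy0 : 0 < μ y := h
  have := key (μ y / (2 * (‖y‖ + 1))) (by positivity)
  rw [div_mul_eq_mul_div, le_div_iff₀ (by positivity)] at this
  nlinarith [norm_nonneg y]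

/-- Inclusion 1: fnc T 0 ⊆ fnc T d for a cone T, d ∈ T, provided μ d ≥ 0. -/

lemma fnc_zero_subset_fnc_dir {T : Set E} (hsc : ∀ s : ℝ, 0 < s → ∀ u ∈ T, s • u ∈ T)
    {d : E} (hd : d ∈ T) {μ : E →L[ℝ] ℝ} (hμ : μ ∈ fnc T 0) (hμd : 0 ≤ μ d) :
    μ ∈ fnc T d := by
  have hnp : ∀ y ∈ T, μ y ≤ 0 := fun y hy => fnc_zero_nonpos hsc hμ hy
  have hμd0 : μ d = 0 := le_antisymm (hnp d hd) hμd
  refine ⟨hd, fun ε hε => ⟨1, one_pos, fun y hy _ => ?_⟩⟩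
  have : μ (y - d) = μ y - μ d := by rw [map_sub]
  rw [this, hμd0, sub_zero]
  have := hnp y hy
  nlinarith [norm_nonneg (y - d), hε]

/-- Inclusion 3: dlnc in direction d ⊆ dlnc in direction 0. -/

lemma dlnc_subset_dlnc_zero {Ω : Set E} {x d : E} {μ : E →L[ℝ] ℝ}
    (hμ : μ ∈ dlnc Ω x d) : μ ∈ dlnc Ω x 0 := by
  obtain ⟨hx, t, w, ξk, htpos, ht0, hw, hξ, hmem⟩ := hμ
  refine ⟨hx, fun k => Real.sqrt (t k), fun k => Real.sqrt (t k) • w k, ξk,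
    fun k => Real.sqrt_pos.mpr (htpos k),
    by simpa [Function.comp_def] using (Real.continuous_sqrt.tendsto 0).comp ht0,
    ?_, hξ, fun k => ?_⟩
  · have : Tendsto (fun k => Real.sqrt (t k)) atTop (𝓝 0) := by
      simpa [Function.comp_def] using (Real.continuous_sqrt.tendsto 0).comp ht0
    simpa using this.smul hw
  · have : Real.sqrt (t k) • Real.sqrt (t k) • w k = t k • w k := by
      rw [smul_smul, Real.mul_self_sqrt (htpos k).le]
    rw [this]; exact hmem k


lemma fnc_tcone_subset_dlnc {Ω : Set E} {x : E} {C : Set E} (hG : GoodCone Ω x C)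
    (hx : x ∈ Ω) {d : E} {μ : E →L[ℝ] ℝ} (hμ : μ ∈ fnc (tcone Ω x) d) :
    μ ∈ dlnc Ω x d := by
  obtain ⟨hcl, hsc, ρ, hρ, hloc⟩ := hG
  rw [GoodCone.tcone_eq ⟨hcl, hsc, ρ, hρ, hloc⟩ hx] at hμ
  obtain ⟨hd, hfnc⟩ := hμ
  set c : ℝ := ρ / (2 * (‖d‖ + 1)) with hc
  have hcpos : 0 < c := by positivity
  refine ⟨hx, fun k => c * (1/2:ℝ)^k, fun _ => d, fun _ => μ, fun k => by positivity,
    tendsto_halfpow c, tendsto_const_nhds, tendsto_const_nhds, fun k => ?_⟩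
  set t : ℝ := c * (1/2:ℝ)^k with htdef
  have htpos : 0 < t := by positivity
  have htle : t ≤ c := by
    have : (1/2:ℝ)^k ≤ 1 := pow_le_one₀ (by norm_num) (by norm_num)
    nlinarith
  have htd : t * ‖d‖ < ρ := by
    have h3 : c * ‖d‖ < ρ := by
      rw [hc, div_mul_eq_mul_div, div_lt_iff₀ (by positivity)]
      nlinarith [norm_nonneg d]
    nlinarith [norm_nonneg d]
  have hmemΩ : x + t • d ∈ Ω := by
    have h1 : ‖(x + t • d) - x‖ < ρ := by
      simp only [add_sub_cancel_left, norm_smul, Real.norm_of_nonneg htpos.le]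
      exact htd
    exact (hloc _ h1).mpr (by simpa using hsc t htpos d hd)
  refine ⟨hmemΩ, fun ε hε => ?_⟩
  obtain ⟨δ', hδ', hprop⟩ := hfnc ε hε
  refine ⟨min (t * δ') (ρ - t * ‖d‖), lt_min (by positivity) (by linarith), fun z hz hznorm => ?_⟩
  have hz1 : ‖z - (x + t • d)‖ < t * δ' := lt_of_lt_of_le hznorm (min_le_left _ _)
  have hz2 : ‖z - (x + t • d)‖ < ρ - t * ‖d‖ := lt_of_lt_of_le hznorm (min_le_right _ _)
  have hzx : ‖z - x‖ < ρ := by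
    have : ‖z - x‖ ≤ ‖z - (x + t • d)‖ + ‖t • d‖ := by
      have : z - x = (z - (x + t • d)) + t • d := by abel
      rw [this]; exact norm_add_le _ _
    rw [norm_smul, Real.norm_of_nonneg htpos.le] at this
    linarith
  have hzC : z - x ∈ C := (hloc _ hzx).mp hz
  set y' : E := t⁻¹ • (z - x) with hy'
  have hy'C : y' ∈ C := hsc t⁻¹ (inv_pos.mpr htpos) _ hzC
  have hty' : t • (y' - d) = z - (x + t • d) := by
    rw [smul_sub, hy', smul_smul, mul_inv_cancel₀ htpos.ne', one_smul]
    abel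
  have hy'd : ‖y' - d‖ < δ' := by
    have : ‖t • (y' - d)‖ = t * ‖y' - d‖ := by
      rw [norm_smul, Real.norm_of_nonneg htpos.le]
    rw [hty'] at this
    -- ‖z - (x + t•d)‖ = t * ‖y' - d‖ < t * δ'
    have h4 : t * ‖y' - d‖ < t * δ' := by rw [← this]; exact hz1
    exact (mul_lt_mul_iff_right₀ htpos).mp h4
  have := hprop y' hy'C hy'd
  -- multiply through by t
  have h5 : t * (μ (y' - d)) ≤ t * (ε * ‖y' - d‖) := by
    exact mul_le_mul_of_nonneg_left this htpos.le
  have h6 : μ (z - (x + t • d)) = t * μ (y' - d) := by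
    rw [← hty', map_smul, smul_eq_mul]
  have h7 : ‖z - (x + t • d)‖ = t * ‖y' - d‖ := by
    rw [← hty', norm_smul, Real.norm_of_nonneg htpos.le]
  rw [h6, h7]
  nlinarith

/-- Functionals in the Fréchet normal cone at points near x are nonpositive on C. -/

lemma fnc_near_nonpos {Ω : Set E} {x : E} {C : Set E} (hcl : IsClosed C)
    (hsc : ∀ s : ℝ, 0 < s → ∀ u ∈ C, s • u ∈ C) {ρ : ℝ} (hρ : 0 < ρ)
    (hloc : ∀ y : E, ‖y - x‖ < ρ → (y ∈ Ω ↔ y - x ∈ C)) (hconv : Convex ℝ C)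
    {y : E} (hy : ‖y - x‖ < ρ) {ξ : E →L[ℝ] ℝ} (hξ : ξ ∈ fnc Ω y)
    {w : E} (hw : w ∈ C) : ξ w ≤ 0 := by
  obtain ⟨hyΩ, hfnc⟩ := hξ
  have hvC : y - x ∈ C := (hloc _ hy).mp hyΩ
  set v : E := y - x with hv
  have key : ∀ ε : ℝ, 0 < ε → ξ w ≤ ε * (‖w - v‖ + ‖v‖) := by
    intro ε hε
    obtain ⟨δ, hδ, hprop⟩ := hfnc ε hε
    -- Part A : ξ (w - v) ≤ ε ‖w - v‖
    have partA : ξ (w - v) ≤ ε * ‖w - v‖ := by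
      set s : ℝ := min (1/2) (min ((ρ - ‖v‖) / (2 * (‖w - v‖ + 1))) (δ / (2 * (‖w - v‖ + 1)))) with hs
      have hρv : 0 < ρ - ‖v‖ := by rw [hv]; linarith
      have hspos : 0 < s := by
        refine lt_min (by norm_num) (lt_min (by positivity) (by positivity))
      have hs1 : s ≤ 1/2 := min_le_left _ _
      have hs2 : s * ‖w - v‖ < ρ - ‖v‖ := by
        have h1 : s ≤ (ρ - ‖v‖) / (2 * (‖w - v‖ + 1)) :=
          le_trans (min_le_right _ _) (min_le_left _ _)
        have h2 : s * ‖w - v‖ ≤ (ρ - ‖v‖) / (2 * (‖w - v‖ + 1)) * ‖w - v‖ :=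
          mul_le_mul_of_nonneg_right h1 (norm_nonneg _)
        have h3 : (ρ - ‖v‖) / (2 * (‖w - v‖ + 1)) * ‖w - v‖ < ρ - ‖v‖ := by
          rw [div_mul_eq_mul_div, div_lt_iff₀ (by positivity)]
          nlinarith [norm_nonneg (w - v)]
        linarith
      have hs3 : s * ‖w - v‖ < δ := by
        have h1 : s ≤ δ / (2 * (‖w - v‖ + 1)) :=
          le_trans (min_le_right _ _) (min_le_right _ _)
        have h2 : s * ‖w - v‖ ≤ δ / (2 * (‖w - v‖ + 1)) * ‖w - v‖ :=
          mul_le_mul_of_nonneg_right h1 (norm_nonneg _)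
        have h3 : δ / (2 * (‖w - v‖ + 1)) * ‖w - v‖ < δ := by
          rw [div_mul_eq_mul_div, div_lt_iff₀ (by positivity)]
          nlinarith [norm_nonneg (w - v)]
        linarith
      set z : E := y + s • (w - v) with hz
      have hzx : z - x = (1 - s) • v + s • w := by
        rw [hz, hv]; rw [smul_sub, sub_smul, one_smul]; abel
      have hzC : z - x ∈ C := by
        rw [hzx]
        exact hconv hvC hw (by linarith) hspos.le (by ring)
      have hzball : ‖z - x‖ < ρ := by
        have h1 : z - x = v + s • (w - v) := by rw [hz, hv]; abel
        have : ‖z - x‖ ≤ ‖v‖ + s * ‖w - v‖ := by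
          rw [h1]
          refine le_trans (norm_add_le _ _) ?_
          rw [norm_smul, Real.norm_of_nonneg hspos.le]
        linarith
      have hzΩ : z ∈ Ω := (hloc _ hzball).mpr hzC
      have hzy : ‖z - y‖ < δ := by
        have : z - y = s • (w - v) := by rw [hz]; abel
        rw [this, norm_smul, Real.norm_of_nonneg hspos.le]
        exact hs3
      have := hprop z hzΩ hzy
      have h6 : ξ (z - y) = s * ξ (w - v) := by
        have : z - y = s • (w - v) := by rw [hz]; abel
        rw [this, map_smul, smul_eq_mul]
      have h7 : ‖z - y‖ = s * ‖w - v‖ := by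
        have : z - y = s • (w - v) := by rw [hz]; abel
        rw [this, norm_smul, Real.norm_of_nonneg hspos.le]
      rw [h6, h7] at this
      have := (mul_le_mul_iff_right₀ hspos).mp (by nlinarith : s * ξ (w - v) ≤ s * (ε * ‖w - v‖))
      linarith
    -- Part B : ξ v ≤ ε ‖v‖
    have partB : ξ v ≤ ε * ‖v‖ := by
      rcases eq_or_ne v 0 with hv0 | hv0
      · rw [hv0]; simp [mul_nonneg hε.le (norm_nonneg (0:E))]
      set s : ℝ := min (1/2) (min ((ρ - ‖v‖) / (2 * (‖v‖ + 1))) (δ / (2 * (‖v‖ + 1)))) with hs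
      have hρv : 0 < ρ - ‖v‖ := by rw [hv]; linarith
      have hspos : 0 < s := lt_min (by norm_num) (lt_min (by positivity) (by positivity))
      have hs2 : s * ‖v‖ < ρ - ‖v‖ := by
        have h1 : s ≤ (ρ - ‖v‖) / (2 * (‖v‖ + 1)) := le_trans (min_le_right _ _) (min_le_left _ _)
        have h2 : s * ‖v‖ ≤ (ρ - ‖v‖) / (2 * (‖v‖ + 1)) * ‖v‖ :=
          mul_le_mul_of_nonneg_right h1 (norm_nonneg _)
        have h3 : (ρ - ‖v‖) / (2 * (‖v‖ + 1)) * ‖v‖ < ρ - ‖v‖ := by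
          rw [div_mul_eq_mul_div, div_lt_iff₀ (by positivity)]
          nlinarith [norm_nonneg v]
        linarith
      have hs3 : s * ‖v‖ < δ := by
        have h1 : s ≤ δ / (2 * (‖v‖ + 1)) := le_trans (min_le_right _ _) (min_le_right _ _)
        have h2 : s * ‖v‖ ≤ δ / (2 * (‖v‖ + 1)) * ‖v‖ :=
          mul_le_mul_of_nonneg_right h1 (norm_nonneg _)
        have h3 : δ / (2 * (‖v‖ + 1)) * ‖v‖ < δ := by
          rw [div_mul_eq_mul_div, div_lt_iff₀ (by positivity)]
          nlinarith [norm_nonneg v]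
        linarith
      set z : E := y + s • v with hz
      have hzx : z - x = (1 + s) • v := by
        rw [hz, hv, add_smul, one_smul]; abel
      have hzC : z - x ∈ C := by rw [hzx]; exact hsc (1 + s) (by linarith) v hvC
      have hzball : ‖z - x‖ < ρ := by
        rw [hzx, norm_smul, Real.norm_of_nonneg (by linarith : (0:ℝ) ≤ 1 + s)]
        nlinarith
      have hzΩ : z ∈ Ω := (hloc _ hzball).mpr hzC
      have hzy : z - y = s • v := by rw [hz]; abel
      have hzyn : ‖z - y‖ < δ := by
        rw [hzy, norm_smul, Real.norm_of_nonneg hspos.le]; exact hs3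
      have := hprop z hzΩ hzyn
      rw [hzy, map_smul, smul_eq_mul, norm_smul, Real.norm_of_nonneg hspos.le] at this
      have := (mul_le_mul_iff_right₀ hspos).mp (by nlinarith : s * ξ v ≤ s * (ε * ‖v‖))
      linarith
    have : ξ w = ξ (w - v) + ξ v := by rw [map_sub]; ring
    rw [this]
    nlinarith
  by_contra h
  push_neg at h
  set M : ℝ := ‖w - v‖ + ‖v‖ with hM
  have hM0 : 0 ≤ M := by positivity
  have := key (ξ w / (2 * (M + 1))) (by positivity)
  rw [div_mul_eq_mul_div, le_div_iff₀ (by positivity)] at this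
  nlinarith

/-- dlnc in any direction ⊆ fnc of tangent cone at 0, for convex good cones. -/

lemma dlnc_subset_fnc_tcone_zero {Ω : Set E} {x : E} {C : Set E} (hG : GoodCone Ω x C)
    (hconv : Convex ℝ C) (hx : x ∈ Ω) {v : E} {μ : E →L[ℝ] ℝ}
    (hμ : μ ∈ dlnc Ω x v) : μ ∈ fnc (tcone Ω x) 0 := by
  have hTC := GoodCone.tcone_eq hG hx
  obtain ⟨hcl, hsc, ρ, hρ, hloc⟩ := hG
  obtain ⟨-, t, w, ξk, htpos, ht0, hw, hξ, hmem⟩ := hμ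
  have hnp : ∀ y ∈ C, μ y ≤ 0 := by
    intro y hy
    have htw : Tendsto (fun k => t k • w k) atTop (𝓝 0) := by
      simpa using ht0.smul hw
    have hev : ∀ᶠ k in atTop, ξk k y ≤ 0 := by
      filter_upwards [(tendsto_iff_norm_sub_tendsto_zero.mp htw).eventually
        (eventually_lt_nhds hρ)] with k hk
      have h1 : ‖(x + t k • w k) - x‖ < ρ := by simpa using hk
      exact fnc_near_nonpos hcl hsc hρ hloc hconv h1 (hmem k) hy
    have hlim : Tendsto (fun k => ξk k y) atTop (𝓝 (μ y)) := by
      have : Continuous fun L : E →L[ℝ] ℝ => L y :=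
        (ContinuousLinearMap.apply ℝ ℝ y).continuous
      exact (this.tendsto μ).comp hξ
    exact le_of_tendsto hlim hev
  rw [hTC]
  have h0C : (0:E) ∈ C := by
    have := (hloc x (by simp [hρ])).mp hx
    simpa using this
  exact ⟨h0C, fun ε hε => ⟨1, one_pos, fun y hy _ => by
    rw [sub_zero]
    have := hnp y hy
    nlinarith [norm_nonneg y]⟩⟩


/-- Lemma 3.2: the chain of inclusions between the multiplier sets, with
equalities when `Ω` is a single convex polyhedron. -/
theorem stmt6 {n m₁ m₂ : ℕ}
    (f : Euc n → ℝ) (hf : ContDiff ℝ 1 f)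
    (F₁ : Euc n → Euc m₁) (F₂ : Euc n → Euc m₂)
    (hF₁ : ContDiff ℝ 1 F₁) (hF₂ : ContDiff ℝ 1 F₂)
    (Ω₁ : Set (Euc m₁)) (Ω₂ : Set (Euc m₂))
    (hΩ₁ : IsFinUnionPolyhedra Ω₁) (hΩ₂ : IsFinUnionPolyhedra Ω₂)
    (xb : Euc n) (hx₁ : F₁ xb ∈ Ω₁) (hx₂ : F₂ xb ∈ Ω₂)
    (l0 : ℝ) (hl0 : 0 ≤ l0) (u : Euc n)
    (hu : fderiv ℝ (PairMap F₁ F₂) xb u ∈ tcone (Ω₁ ×ˢ Ω₂) (PairMap F₁ F₂ xb))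
    (hcrit : fderiv ℝ f xb u ≤ 0) :
    (LamHat f F₁ F₂ Ω₁ Ω₂ xb 0 l0 ⊆ LamHat f F₁ F₂ Ω₁ Ω₂ xb u l0 ∧
     LamHat f F₁ F₂ Ω₁ Ω₂ xb u l0 ⊆ Lam f F₁ F₂ Ω₁ Ω₂ xb u l0 ∧
     Lam f F₁ F₂ Ω₁ Ω₂ xb u l0 ⊆ Lam f F₁ F₂ Ω₁ Ω₂ xb 0 l0) ∧
    (IsPolyhedron (Ω₁ ×ˢ Ω₂) →
      (LamHat f F₁ F₂ Ω₁ Ω₂ xb 0 l0 = LamHat f F₁ F₂ Ω₁ Ω₂ xb u l0 ∧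
       LamHat f F₁ F₂ Ω₁ Ω₂ xb u l0 = Lam f F₁ F₂ Ω₁ Ω₂ xb u l0 ∧
       Lam f F₁ F₂ Ω₁ Ω₂ xb u l0 = Lam f F₁ F₂ Ω₁ Ω₂ xb 0 l0)) := by
  classical
  set Ω : Set (Euc m₁ × Euc m₂) := Ω₁ ×ˢ Ω₂ with hΩ
  set xΩ : Euc m₁ × Euc m₂ := PairMap F₁ F₂ xb with hxΩ
  set d : Euc m₁ × Euc m₂ := fderiv ℝ (PairMap F₁ F₂) xb u with hd
  have hxmem : xΩ ∈ Ω := ⟨hx₁, hx₂⟩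
  have hd0 : fderiv ℝ (PairMap F₁ F₂) xb (0 : Euc n) = 0 := map_zero _
  have hsc : ∀ s : ℝ, 0 < s → ∀ v ∈ tcone Ω xΩ, s • v ∈ tcone Ω xΩ :=
    fun s hs v hv => tcone_smul_mem hs hv
  -- the good cone for the product
  obtain ⟨C₁, hG₁⟩ := goodCone_union hΩ₁ hx₁
  obtain ⟨C₂, hG₂⟩ := goodCone_union hΩ₂ hx₂
  have hGC : GoodCone Ω xΩ (C₁ ×ˢ C₂) := hG₁.prod hG₂
  -- the Lagrangian gives μ d ≥ 0 for multipliers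
  have hLag : ∀ μ : (Euc m₁ × Euc m₂) →L[ℝ] ℝ,
      l0 • fderiv ℝ f xb + μ.comp (fderiv ℝ (PairMap F₁ F₂) xb) = 0 → 0 ≤ μ d := by
    intro μ hL
    have h1 := ContinuousLinearMap.ext_iff.mp hL u
    simp only [ContinuousLinearMap.add_apply, ContinuousLinearMap.smul_apply,
      ContinuousLinearMap.comp_apply, ContinuousLinearMap.zero_apply, smul_eq_mul] at h1
    have h2 : μ d = -(l0 * fderiv ℝ f xb u) := by rw [← hd] at h1; linarith
    rw [h2]
    nlinarith
  -- the three inclusions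
  have inc1 : LamHat f F₁ F₂ Ω₁ Ω₂ xb 0 l0 ⊆ LamHat f F₁ F₂ Ω₁ Ω₂ xb u l0 := by
    rintro μ ⟨hμ1, hμ2, hμ3⟩
    rw [hd0] at hμ1
    exact ⟨fnc_zero_subset_fnc_dir hsc hu hμ1 (hLag μ hμ2), hμ2, hμ3⟩
  have inc2 : LamHat f F₁ F₂ Ω₁ Ω₂ xb u l0 ⊆ Lam f F₁ F₂ Ω₁ Ω₂ xb u l0 := by
    rintro μ ⟨hμ1, hμ2, hμ3⟩
    exact ⟨fnc_tcone_subset_dlnc hGC hxmem hμ1, hμ2, hμ3⟩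
  have inc3 : Lam f F₁ F₂ Ω₁ Ω₂ xb u l0 ⊆ Lam f F₁ F₂ Ω₁ Ω₂ xb 0 l0 := by
    rintro μ ⟨hμ1, hμ2, hμ3⟩
    refine ⟨?_, hμ2, hμ3⟩
    rw [hd0]
    exact dlnc_subset_dlnc_zero hμ1
  refine ⟨⟨inc1, inc2, inc3⟩, fun hpoly => ?_⟩
  obtain ⟨C, hCconv, hGC'⟩ := hpoly.goodCone hxmem
  have inc4 : Lam f F₁ F₂ Ω₁ Ω₂ xb 0 l0 ⊆ LamHat f F₁ F₂ Ω₁ Ω₂ xb 0 l0 := by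
    rintro μ ⟨hμ1, hμ2, hμ3⟩
    refine ⟨?_, hμ2, hμ3⟩
    rw [hd0]
    rw [hd0] at hμ1
    exact dlnc_subset_fnc_tcone_zero hGC' hCconv hxmem hμ1
  have e1 : LamHat f F₁ F₂ Ω₁ Ω₂ xb 0 l0 = LamHat f F₁ F₂ Ω₁ Ω₂ xb u l0 :=
    Subset.antisymm inc1 (fun μ hμ => inc4 (inc3 (inc2 hμ)))
  have e2 : LamHat f F₁ F₂ Ω₁ Ω₂ xb u l0 = Lam f F₁ F₂ Ω₁ Ω₂ xb u l0 :=
    Subset.antisymm inc2 (fun μ hμ => inc1 (inc4 (inc3 hμ)))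
  have e3 : Lam f F₁ F₂ Ω₁ Ω₂ xb u l0 = Lam f F₁ F₂ Ω₁ Ω₂ xb 0 l0 :=
    Subset.antisymm inc3 (fun μ hμ => inc2 (inc1 (inc4 hμ)))
  exact ⟨e1, e2, e3⟩
end
end
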